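/- arXiv:2504.12534 — 4 statements merged into one kernel-verified Lean document; each statement's English description precedes it below -/
import Mathlib

section
/- The distribution function F of ψ is strictly increasing on [0,1]: for all 0 ≤ s < t ≤ 1 one has F(s) < F(t). (Paper's Lemma 2.2(c)(i).) -/
open Set MeasureTheory Filter
open scoped ENNReal Topology Classical

/-- The setup of Section 2 of the paper: a full-branched Markov linear map `G` on `[0,1]`
with branch domains `I_1,…,I_{k_I}` (mapped affinely onto `[0,1]`) and complementary
intervals `J_j` (mapped affinely onto `(0,1)`), all of length at most `1/2`. -/
structure CantorData where
  kI : ℕ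
  hkI : 1 ≤ kI
  a : ℕ → ℝ
  ha_lt : ∀ i, i + 1 < 2 * kI → a i < a (i + 1)
  ha0 : 0 ≤ a 0
  ha1 : a (2 * kI - 1) ≤ 1
  G : ℝ → ℝ
  hGmaps : Set.MapsTo G (Set.Icc 0 1) (Set.Icc 0 1)
  hGI : ∀ i < kI, ∃ s c : ℝ,
    |s| * (a (2 * i + 1) - a (2 * i)) = 1 ∧
    (∀ x ∈ Set.Icc (a (2 * i)) (a (2 * i + 1)), G x = s * x + c) ∧
    Set.BijOn G (Set.Icc (a (2 * i)) (a (2 * i + 1))) (Set.Icc 0 1)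
  hGJmid : ∀ i, i + 1 < kI → ∃ s c : ℝ,
    |s| * (a (2 * i + 2) - a (2 * i + 1)) = 1 ∧
    (∀ x ∈ Set.Ioo (a (2 * i + 1)) (a (2 * i + 2)), G x = s * x + c) ∧
    Set.SurjOn G (Set.Ioo (a (2 * i + 1)) (a (2 * i + 2))) (Set.Ioo 0 1)
  hGJleft : 0 < a 0 → ∃ s c : ℝ,
    |s| * a 0 = 1 ∧
    (∀ x ∈ Set.Ico 0 (a 0), G x = s * x + c) ∧
    Set.SurjOn G (Set.Ico 0 (a 0)) (Set.Ioo 0 1)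
  hGJright : a (2 * kI - 1) < 1 → ∃ s c : ℝ,
    |s| * (1 - a (2 * kI - 1)) = 1 ∧
    (∀ x ∈ Set.Ioc (a (2 * kI - 1)) 1, G x = s * x + c) ∧
    Set.SurjOn G (Set.Ioc (a (2 * kI - 1)) 1) (Set.Ioo 0 1)
  hIlen : ∀ i < kI, a (2 * i + 1) - a (2 * i) ≤ 1 / 2
  hJlenL : a 0 ≤ 1 / 2
  hJlenR : 1 - a (2 * kI - 1) ≤ 1 / 2
  hJlenM : ∀ i, i + 1 < kI → a (2 * i + 2) - a (2 * i + 1) ≤ 1 / 2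
  hkJ : (Set.Icc (0:ℝ) 1 \ ⋃ i ∈ Finset.range kI,
      Set.Icc (a (2 * i)) (a (2 * i + 1))).Nonempty

namespace CantorData

variable (S : CantorData)

/-- The union `⋃_i I_i` of the branch domains forming the Cantor construction. -/
def IU : Set ℝ := ⋃ i ∈ Finset.range S.kI, Set.Icc (S.a (2 * i)) (S.a (2 * i + 1))

/-- `Λ_n = {x ∈ [0,1] : G^{i-1}(x) ∈ ⋃ I for all 1 ≤ i ≤ n}`. -/
def Lam (n : ℕ) : Set ℝ := {x ∈ Set.Icc (0:ℝ) 1 | ∀ i < n, S.G^[i] x ∈ S.IU}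

/-- The dynamically defined Cantor set `Λ = ⋂_n Λ_n`. -/
def Cantor : Set ℝ := ⋂ n : ℕ, S.Lam n

/-- `λ = |⋃ I_i| = Σ_i 1/m_i`. -/
noncomputable def lam : ℝ := ∑ i ∈ Finset.range S.kI, (S.a (2 * i + 1) - S.a (2 * i))

/-- `𝔪`, Lebesgue measure on `[0,1]`. -/
noncomputable def mes (_S : CantorData) : Measure ℝ := volume.restrict (Set.Icc 0 1)

/-- `ψ(x) = Σ_{i ∈ 𝓘_x} 2^{-i}` where `𝓘_x = {i ≥ 1 : G^{i-1}(x) ∉ ⋃ I}`. -/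
noncomputable def psi (x : ℝ) : ℝ :=
  ∑' i : ℕ, if S.G^[i] x ∈ S.IU then 0 else (2:ℝ)⁻¹ ^ (i + 1)

/-- `F(t) = 𝔪{x : ψ(x) ≤ t}`, the distribution function of `ψ`. -/
noncomputable def F (t : ℝ) : ℝ := (S.mes {x | S.psi x ≤ t}).toReal

/-- `φ_α = (F ∘ ψ)^{-1/α}`, with value `∞` where `F ∘ ψ` vanishes. -/
noncomputable def phi (α : ℝ) (x : ℝ) : ℝ≥0∞ :=
  ENNReal.ofReal (S.F (S.psi x)) ^ (-(1 / α))

/-- `X_n = φ_α ∘ G^n`. -/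
noncomputable def X (α : ℝ) (n : ℕ) (x : ℝ) : ℝ≥0∞ := S.phi α (S.G^[n] x)

/-- `P_n`: the points following the Cantor construction exactly `n` steps and
never entering `⋃ I` afterwards. -/
def Pset (n : ℕ) : Set ℝ :=
  {x ∈ Set.Icc (0:ℝ) 1 | (∀ i < n, S.G^[i] x ∈ S.IU) ∧ ∀ i, n ≤ i → S.G^[i] x ∉ S.IU}

/-- The family of partition intervals `(I,J)_1,…,(I,J)_{k_I+k_J}`. -/
def PieceFamily : Set (Set ℝ) :=
  ((fun i => Set.Icc (S.a (2 * i)) (S.a (2 * i + 1))) '' Set.Iio S.kI) ∪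
  ((fun i => Set.Ioo (S.a (2 * i + 1)) (S.a (2 * i + 2))) '' {i | i + 1 < S.kI}) ∪
  {Set.Ico (0:ℝ) (S.a 0), Set.Ioc (S.a (2 * S.kI - 1)) 1}

/-- The depth-`d` cylinder `C_w = ⋂_{k=1}^d G^{-(k-1)}((I,J)_{w_k})`. -/
def Cyl (d : ℕ) (w : ℕ → Set ℝ) : Set ℝ := ⋂ k ∈ Finset.range d, (S.G^[k]) ⁻¹' (w k)

/-- `C` is a depth-`d` cylinder. -/
def IsCylinder (d : ℕ) (C : Set ℝ) : Prop :=
  ∃ w : ℕ → Set ℝ, (∀ k < d, w k ∈ S.PieceFamily) ∧ C = S.Cyl d w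

/-- `Υ⁺(A,d)`: union of the depth-`d` cylinders meeting `A`. -/
def upApprox (A : Set ℝ) (d : ℕ) : Set ℝ :=
  ⋃₀ {C | S.IsCylinder d C ∧ (C ∩ A).Nonempty}

/-- `Υ⁻(A,d)`: union of the depth-`d` cylinders contained in `A`. -/
def lowApprox (A : Set ℝ) (d : ℕ) : Set ℝ :=
  ⋃₀ {C | S.IsCylinder d C ∧ C ⊆ A}

/-- `u_n(τ) = (n/τ)^{1/α}`. -/
noncomputable def un (_S : CantorData) (α τ : ℝ) (n : ℕ) : ℝ := ((n : ℝ) / τ) ^ (1 / α)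

/-- `U_n(τ) = {X_0 > u_n(τ)}`. -/
noncomputable def Un (α τ : ℝ) (n : ℕ) : Set ℝ :=
  {x ∈ Set.Icc (0:ℝ) 1 | ENNReal.ofReal (S.un α τ n) < S.X α 0 x}

/-- `U_n^{(1)}(τ) = U_n(τ) ∩ G^{-1}([0,1] ∖ U_n(τ))`. -/
noncomputable def Un1 (α τ : ℝ) (n : ℕ) : Set ℝ :=
  S.Un α τ n ∩ S.G ⁻¹' (Set.Icc 0 1 \ S.Un α τ n)

/-- `U_n(τ',τ'') = U_n(τ') ∖ U_n(τ'')`. -/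
noncomputable def UnPair (α τ' τ'' : ℝ) (n : ℕ) : Set ℝ := S.Un α τ' n \ S.Un α τ'' n

/-- `U_n(τ',τ'')^{(1)}`. -/
noncomputable def UnPair1 (α τ' τ'' : ℝ) (n : ℕ) : Set ℝ :=
  S.UnPair α τ' τ'' n ∩ S.G ⁻¹' (Set.Icc 0 1 \ S.UnPair α τ' τ'' n)

/-- `j_{n,τ}`: the least `j` with `λ^j ≤ τ/n`. -/
noncomputable def jn (τ : ℝ) (n : ℕ) : ℕ := sInf {j : ℕ | S.lam ^ j ≤ τ / n}

/-- `Γ_n^+`: outer approximation of `U_n(τ',τ'')^{(1)}` by depth-`2 j_{n,τ'}` cylinders. -/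
noncomputable def GammaPlus (α τ' τ'' : ℝ) (n : ℕ) : Set ℝ :=
  S.upApprox (S.UnPair1 α τ' τ'' n) (2 * S.jn τ' n)

/-- `Γ_n^-`: inner approximation of `U_n(τ',τ'')^{(1)}` by depth-`2 j_{n,τ'}` cylinders. -/
noncomputable def GammaMinus (α τ' τ'' : ℝ) (n : ℕ) : Set ℝ :=
  S.lowApprox (S.UnPair1 α τ' τ'' n) (2 * S.jn τ' n)

end CantorData


section Aux
variable (S : CantorData)
open CantorData

lemma aux_a_lt {i j : ℕ} (hij : i < j) (hj : j < 2 * S.kI) : S.a i < S.a j := by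
  induction j with
  | zero => omega
  | succ m ih =>
    rcases Nat.lt_succ_iff_lt_or_eq.mp hij with h | h
    · exact (ih h (by omega)).trans (S.ha_lt m hj)
    · subst h; exact S.ha_lt i hj

lemma aux_a_mono {i j : ℕ} (hij : i ≤ j) (hj : j < 2 * S.kI) : S.a i ≤ S.a j := by
  rcases eq_or_lt_of_le hij with h | h
  · subst h; exact le_rfl
  · exact (aux_a_lt S h hj).le

lemma aux_a_mem {i : ℕ} (hi : i < 2 * S.kI) : S.a i ∈ Icc (0:ℝ) 1 := by
  constructor
  · exact le_trans S.ha0 (aux_a_mono S (Nat.zero_le i) hi)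
  · exact le_trans (aux_a_mono S (by omega : i ≤ 2 * S.kI - 1) (by omega)) S.ha1

lemma aux_IU_mem {x : ℝ} (hx : x ∈ Icc (S.a 0) (S.a 1)) : x ∈ S.IU := by
  have h1 : (0:ℕ) ∈ Finset.range S.kI := Finset.mem_range.mpr S.hkI
  exact Set.mem_biUnion h1 (by simpa using hx)

lemma aux_exists_piece (b : Bool) : ∃ (P : Set ℝ) (sl c : ℝ), MeasurableSet P ∧
    P ⊆ Icc 0 1 ∧ (∀ x ∈ P, (x ∈ S.IU ↔ b = false)) ∧ sl ≠ 0 ∧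
    (∀ x ∈ P, S.G x = sl * x + c) ∧ SurjOn (fun x => sl * x + c) P (Ioo 0 1) := by
  have hkI := S.hkI
  have slope_ne : ∀ sl d : ℝ, |sl| * d = 1 → sl ≠ 0 := by
    intro sl d h hsl0; rw [hsl0] at h; simp at h
  cases b with
  | false =>
    obtain ⟨sl, c, h1, h2, h3⟩ := S.hGI 0 hkI
    simp only [Nat.mul_zero, Nat.zero_add] at h1 h2 h3
    refine ⟨Icc (S.a 0) (S.a 1), sl, c, measurableSet_Icc, ?_, ?_, slope_ne sl _ h1, h2, ?_⟩
    · intro x hx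
      exact ⟨le_trans (aux_a_mem S (by omega)).1 hx.1, le_trans hx.2 (aux_a_mem S (by omega)).2⟩
    · intro x hx; simp [aux_IU_mem S hx]
    · intro y hy
      obtain ⟨x, hxP, hxy⟩ := h3.surjOn (Ioo_subset_Icc_self hy)
      exact ⟨x, hxP, by simpa [← h2 x hxP] using hxy⟩
  | true =>
    by_cases h0 : 0 < S.a 0
    · obtain ⟨sl, c, h1, h2, h3⟩ := S.hGJleft h0
      refine ⟨Ico 0 (S.a 0), sl, c, measurableSet_Ico, ?_, ?_, slope_ne sl _ h1, h2, ?_⟩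
      · intro x hx; exact ⟨hx.1, le_trans hx.2.le (aux_a_mem S (by omega)).2⟩
      · intro x hx
        simp only [Bool.true_eq_false, iff_false]
        intro hxIU
        simp only [CantorData.IU, Finset.mem_range, Set.mem_iUnion] at hxIU
        obtain ⟨i, hi, hxi⟩ := hxIU
        have : S.a 0 ≤ S.a (2 * i) := aux_a_mono S (Nat.zero_le _) (by omega)
        have := hxi.1
        have := hx.2
        linarith
      · intro y hy
        obtain ⟨x, hxP, hxy⟩ := h3 hy
        exact ⟨x, hxP, by simpa [← h2 x hxP] using hxy⟩
    · by_cases h1' : S.a (2 * S.kI - 1) < 1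
      · obtain ⟨sl, c, h1, h2, h3⟩ := S.hGJright h1'
        refine ⟨Ioc (S.a (2 * S.kI - 1)) 1, sl, c, measurableSet_Ioc, ?_, ?_, slope_ne sl _ h1, h2, ?_⟩
        · intro x hx; exact ⟨le_trans (aux_a_mem S (by omega)).1 hx.1.le, hx.2⟩
        · intro x hx
          simp only [Bool.true_eq_false, iff_false]
          intro hxIU
          simp only [CantorData.IU, Finset.mem_range, Set.mem_iUnion] at hxIU
          obtain ⟨i, hi, hxi⟩ := hxIU
          have : S.a (2 * i + 1) ≤ S.a (2 * S.kI - 1) := aux_a_mono S (by omega) (by omega)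
          have := hxi.2
          have := hx.1
          linarith
        · intro y hy
          obtain ⟨x, hxP, hxy⟩ := h3 hy
          exact ⟨x, hxP, by simpa [← h2 x hxP] using hxy⟩
      · -- a 0 = 0 and a (2kI-1) = 1; then kI ≥ 2, use middle piece
        have ha00 : S.a 0 = 0 := le_antisymm (not_lt.mp h0) S.ha0
        have ha11 : S.a (2 * S.kI - 1) = 1 := le_antisymm S.ha1 (not_lt.mp h1')
        have hkI2 : 2 ≤ S.kI := by
          by_contra hlt
          have hk1 : S.kI = 1 := by omega
          obtain ⟨x, hx⟩ := S.hkJ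
          apply hx.2
          simp only [hk1, Finset.range_one, Finset.mem_singleton, Set.mem_iUnion]
          refine ⟨0, by simp, ?_⟩
          have := hx.1
          constructor
          · rw [show 2 * 0 = 0 by ring, ha00]; exact this.1
          · rw [show 2 * 0 + 1 = 1 by ring]
            rw [hk1] at ha11; norm_num at ha11
            rw [ha11]; exact this.2
        obtain ⟨sl, c, h1, h2, h3⟩ := S.hGJmid 0 (by omega)
        simp only [Nat.mul_zero, Nat.zero_add] at h1 h2 h3
        refine ⟨Ioo (S.a 1) (S.a 2), sl, c, measurableSet_Ioo, ?_, ?_, slope_ne sl _ h1, h2, ?_⟩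
        · intro x hx
          exact ⟨le_trans (aux_a_mem S (by omega)).1 hx.1.le,
                 le_trans hx.2.le (aux_a_mem S (by omega)).2⟩
        · intro x hx
          simp only [Bool.true_eq_false, iff_false]
          intro hxIU
          simp only [CantorData.IU, Finset.mem_range, Set.mem_iUnion] at hxIU
          obtain ⟨i, hi, hxi⟩ := hxIU
          rcases Nat.eq_zero_or_pos i with hi0 | hi1
          · subst hi0
            have := hxi.2; have := hx.1; linarith [hxi.2, hx.1, (show S.a (2 * 0 + 1) = S.a 1 from rfl)]
          · have : S.a 2 ≤ S.a (2 * i) := aux_a_mono S (by omega) (by omega)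
            have := hxi.1; have := hx.2
            linarith
        · intro y hy
          obtain ⟨x, hxP, hxy⟩ := h3 hy
          exact ⟨x, hxP, by simpa [← h2 x hxP] using hxy⟩

lemma aux_vol_preimage (sl c : ℝ) (h : sl ≠ 0) (A : Set ℝ) :
    volume ((fun x => sl * x + c) ⁻¹' A) = ENNReal.ofReal |sl⁻¹| * volume A := by
  have heq : (fun x => sl * x + c) ⁻¹' A = (sl * ·) ⁻¹' ((· + c) ⁻¹' A) := rfl
  rw [heq, Real.volume_preimage_mul_left h]
  congr 1
  exact measure_preimage_add_right volume c A

lemma aux_exists_cyl : ∀ (n : ℕ) (w : ℕ → Bool), ∃ A : Set ℝ, MeasurableSet A ∧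
    A ⊆ Icc 0 1 ∧ 0 < volume A ∧
    ∀ x ∈ A, ∀ i < n, (S.G^[i] x ∈ S.IU ↔ w i = false) := by
  intro n
  induction n with
  | zero =>
    exact fun w => ⟨Icc 0 1, measurableSet_Icc, subset_rfl, by simp,
      fun x _ i hi => absurd hi (Nat.not_lt_zero i)⟩
  | succ n ih =>
    intro w
    obtain ⟨P, sl, c, hPm, hPsub, hPIU, hsl, hG, hsurj⟩ := aux_exists_piece S (w 0)
    obtain ⟨A', hA'm, hA'sub, hA'pos, hA'⟩ := ih (fun i => w (i + 1))
    have hmcont : Continuous (fun x : ℝ => sl * x + c) := by continuity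
    refine ⟨P ∩ (fun x => sl * x + c) ⁻¹' A', hPm.inter (hmcont.measurable hA'm), 
      fun x hx => hPsub hx.1, ?_, ?_⟩
    · -- positivity
      have key : (fun x => sl * x + c) ⁻¹' (A' ∩ Ioo 0 1) ⊆ P ∩ (fun x => sl * x + c) ⁻¹' A' := by
        rintro x ⟨hx1, hx2⟩
        obtain ⟨x', hx'P, hx'⟩ := hsurj hx2
        have hxx : x' = x := mul_left_cancel₀ hsl (by simpa using congrArg (· - c) hx')
        exact ⟨hxx ▸ hx'P, hx1⟩
      have hvol' : volume (A' ∩ Ioo 0 1) = volume A' := by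
        apply le_antisymm (measure_mono inter_subset_left)
        have hsub2 : A' ⊆ (A' ∩ Ioo 0 1) ∪ ({0} ∪ {1} : Set ℝ) := by
          intro x hx
          rcases lt_or_eq_of_le (hA'sub hx).1 with h0 | h0
          · rcases lt_or_eq_of_le (hA'sub hx).2 with h1 | h1
            · exact Or.inl ⟨hx, h0, h1⟩
            · exact Or.inr (Or.inr (by simpa using h1))
          · exact Or.inr (Or.inl (by simpa using h0.symm))
        calc volume A' ≤ volume ((A' ∩ Ioo 0 1) ∪ ({0} ∪ {1})) := measure_mono hsub2
          _ ≤ volume (A' ∩ Ioo 0 1) + volume ({0} ∪ {1} : Set ℝ) := measure_union_le _ _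
          _ = volume (A' ∩ Ioo 0 1) := by
              rw [show volume ({0} ∪ {1} : Set ℝ) = 0 from ?_, add_zero]
              refine measure_union_null (by simp) (by simp)
      calc (0:ℝ≥0∞) < ENNReal.ofReal |sl⁻¹| * volume (A' ∩ Ioo 0 1) := by
            apply ENNReal.mul_pos
            · simp only [ne_eq, ENNReal.ofReal_eq_zero, not_le]
              exact abs_pos.mpr (inv_ne_zero hsl)
            · rw [hvol']; exact hA'pos.ne'
        _ = volume ((fun x => sl * x + c) ⁻¹' (A' ∩ Ioo 0 1)) := (aux_vol_preimage sl c hsl _).symm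
        _ ≤ volume (P ∩ (fun x => sl * x + c) ⁻¹' A') := measure_mono key
    · rintro x ⟨hxP, hxpre⟩ i hi
      cases i with
      | zero => simpa using hPIU x hxP
      | succ i =>
        rw [Function.iterate_succ_apply, hG x hxP]
        exact hA' _ hxpre i (by omega)

lemma aux_exists_word : ∀ (n k : ℕ), k < 2 ^ n → ∃ w : ℕ → Bool,
    ∑ i ∈ Finset.range n, (if w i = false then 0 else ((2:ℝ)⁻¹) ^ (i + 1)) = k / 2 ^ n := by
  intro n
  induction n with
  | zero =>
    intro k hk
    interval_cases k
    exact ⟨fun _ => false, by simp⟩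
  | succ n ih =>
    intro k hk
    by_cases h : k < 2 ^ n
    · obtain ⟨w, hw⟩ := ih k h
      refine ⟨fun i => if i = 0 then false else w (i - 1), ?_⟩
      rw [Finset.sum_range_succ']
      simp only [Nat.add_sub_cancel, Nat.succ_ne_zero, if_false, if_true, reduceIte]
      have hterm : ∀ i : ℕ, (if w i = false then (0:ℝ) else (2:ℝ)⁻¹ ^ (i + 1 + 1))
          = (2:ℝ)⁻¹ * (if w i = false then 0 else (2:ℝ)⁻¹ ^ (i + 1)) := by
        intro i; by_cases hwi : w i = false <;> simp [hwi] <;> ring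
      rw [Finset.sum_congr rfl (fun i _ => hterm i), ← Finset.mul_sum, hw]
      have h2n : (2:ℝ) ^ n ≠ 0 := by positivity
      rw [pow_succ]
      field_simp
      ring
    · have h2 : k - 2 ^ n < 2 ^ n := by omega
      obtain ⟨w, hw⟩ := ih (k - 2 ^ n) h2
      refine ⟨fun i => if i = 0 then true else w (i - 1), ?_⟩
      rw [Finset.sum_range_succ']
      simp only [Nat.add_sub_cancel, Nat.succ_ne_zero, if_false, if_true, reduceIte]
      have hterm : ∀ i : ℕ, (if w i = false then (0:ℝ) else (2:ℝ)⁻¹ ^ (i + 1 + 1))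
          = (2:ℝ)⁻¹ * (if w i = false then 0 else (2:ℝ)⁻¹ ^ (i + 1)) := by
        intro i; by_cases hwi : w i = false <;> simp [hwi] <;> ring
      rw [Finset.sum_congr rfl (fun i _ => hterm i), ← Finset.mul_sum, hw]
      have hcast : ((k - 2 ^ n : ℕ) : ℝ) = (k : ℝ) - 2 ^ n := by
        push_cast [Nat.cast_sub (by omega : 2 ^ n ≤ k)]; ring
      rw [hcast, pow_succ]
      have h2n : (2:ℝ) ^ n ≠ 0 := by positivity
      field_simp
      simp only [Bool.true_eq_false, if_false]
      ring

lemma aux_psi_bounds (n : ℕ) (w : ℕ → Bool) (x : ℝ)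
    (hx : ∀ i < n, (S.G^[i] x ∈ S.IU ↔ w i = false)) :
    (∑ i ∈ Finset.range n, (if w i = false then 0 else ((2:ℝ)⁻¹) ^ (i + 1))) ≤ S.psi x ∧
    S.psi x ≤ (∑ i ∈ Finset.range n, (if w i = false then 0 else ((2:ℝ)⁻¹) ^ (i + 1)))
      + (2:ℝ)⁻¹ ^ n := by
  classical
  set f : ℕ → ℝ := fun i => if S.G^[i] x ∈ S.IU then 0 else (2:ℝ)⁻¹ ^ (i + 1) with hf
  have hf0 : ∀ i, 0 ≤ f i := by intro i; by_cases h : S.G^[i] x ∈ S.IU <;> simp [hf, h] <;> positivity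
  have hfle : ∀ i, f i ≤ (2:ℝ)⁻¹ ^ (i + 1) := by
    intro i; by_cases h : S.G^[i] x ∈ S.IU <;> simp [hf, h] <;> positivity
  have hgsum : Summable (fun i : ℕ => (2:ℝ)⁻¹ ^ (i + 1)) := by
    have := (summable_geometric_of_lt_one (by norm_num : (0:ℝ) ≤ 2⁻¹) (by norm_num)).mul_right 2⁻¹
    simpa [pow_succ] using this
  have hsum : Summable f := Summable.of_nonneg_of_le hf0 hfle hgsum
  have hpsi : S.psi x = ∑' i, f i := rfl
  have hsplit := hsum.sum_add_tsum_nat_add n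
  have hhead : ∑ i ∈ Finset.range n, f i
      = ∑ i ∈ Finset.range n, (if w i = false then 0 else ((2:ℝ)⁻¹) ^ (i + 1)) := by
    refine Finset.sum_congr rfl fun i hi => ?_
    have := hx i (Finset.mem_range.mp hi)
    by_cases hwi : w i = false
    · simp [hf, this.mpr hwi, hwi]
    · have : ¬ (S.G^[i] x ∈ S.IU) := fun h => hwi (this.mp h)
      simp [hf, this, hwi]
  have htail0 : 0 ≤ ∑' i, f (i + n) := tsum_nonneg fun i => hf0 _
  have htail1 : ∑' i, f (i + n) ≤ (2:ℝ)⁻¹ ^ n := by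
    have hb : Summable (fun i : ℕ => (2:ℝ)⁻¹ ^ (i + n + 1)) := by
      have := hgsum.mul_right ((2:ℝ)⁻¹ ^ n)
      apply Summable.of_nonneg_of_le (fun i => by positivity) (fun i => ?_) this
      rw [show i + n + 1 = (i + 1) + n by ring, pow_add]
    calc ∑' i, f (i + n) ≤ ∑' i : ℕ, (2:ℝ)⁻¹ ^ (i + n + 1) :=
          Summable.tsum_le_tsum (fun i => hfle _) ((summable_nat_add_iff n).mpr hsum) hb
      _ = ∑' i : ℕ, (2:ℝ)⁻¹ ^ i * ((2:ℝ)⁻¹ ^ n * 2⁻¹) := by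
          congr 1; funext i; rw [← pow_succ, ← pow_add]; ring_nf
      _ = (1 - 2⁻¹)⁻¹ * ((2:ℝ)⁻¹ ^ n * 2⁻¹) := by
          rw [tsum_mul_right, tsum_geometric_of_lt_one (by norm_num) (by norm_num)]
      _ = (2:ℝ)⁻¹ ^ n := by norm_num; ring
  constructor
  · rw [hpsi, ← hsplit, ← hhead]; linarith
  · rw [hpsi, ← hsplit, ← hhead]; linarith

end Aux


/-- the distribution function `F` of `ψ` is strictly increasing on `[0,1]`. -/
theorem F_strictMono (S : CantorData) (s t : ℝ)
    (hs : 0 ≤ s) (hst : s < t) (ht : t ≤ 1) :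
    S.F s < S.F t := by
  classical
  -- choose a dyadic scale
  obtain ⟨n, hn⟩ := exists_pow_lt_of_lt_one (show (0:ℝ) < (t - s) / 2 by linarith)
    (show (2:ℝ)⁻¹ < 1 by norm_num)
  have h2n : (0:ℝ) < 2 ^ n := by positivity
  have hpow : ((2:ℝ)⁻¹) ^ n = 1 / 2 ^ n := by rw [inv_pow]; ring
  set k : ℕ := ⌊s * 2 ^ n⌋₊ + 1 with hk
  have hsk : s < (k : ℝ) / 2 ^ n := by
    rw [lt_div_iff₀ h2n]
    have := Nat.lt_floor_add_one (s * 2 ^ n)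
    rw [hk]
    push_cast
    linarith
  have hkle : (k : ℝ) ≤ s * 2 ^ n + 1 := by
    have := Nat.floor_le (show (0:ℝ) ≤ s * 2 ^ n by positivity)
    rw [hk]
    push_cast
    linarith
  have hkt : (k : ℝ) / 2 ^ n + ((2:ℝ)⁻¹) ^ n ≤ t := by
    rw [hpow]
    have h1 : (k : ℝ) / 2 ^ n ≤ s + 1 / 2 ^ n := by
      rw [div_le_iff₀ h2n]; field_simp; linarith
    have h2 : (1:ℝ) / 2 ^ n < (t - s) / 2 := by rw [← hpow]; exact hn
    linarith
  have hk2 : k < 2 ^ n := by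
    have h1 : (k : ℝ) / 2 ^ n + 1 / 2 ^ n ≤ 1 := by rw [← hpow] at *; linarith
    have h2 : (k : ℝ) + 1 ≤ 2 ^ n := by
      rw [← add_div, div_le_one h2n] at h1; linarith
    rw [hk] at h2 ⊢
    push_cast at h2
    have h3 : ((⌊s * 2 ^ n⌋₊ + 1 : ℕ) : ℝ) < ((2 ^ n : ℕ) : ℝ) := by push_cast; linarith
    exact_mod_cast h3
  obtain ⟨w, hw⟩ := aux_exists_word n k hk2
  obtain ⟨A, hAm, hAsub, hApos, hA⟩ := aux_exists_cyl S n w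
  -- ψ bounds on A
  have hpsiA : ∀ x ∈ A, s < S.psi x ∧ S.psi x ≤ t := by
    intro x hx
    obtain ⟨hb1, hb2⟩ := aux_psi_bounds S n w x (hA x hx)
    rw [hw] at hb1 hb2
    exact ⟨lt_of_lt_of_le hsk hb1, le_trans hb2 hkt⟩
  -- measure comparison
  have hmesS : S.mes {x | S.psi x ≤ s} = volume ({x | S.psi x ≤ s} ∩ Icc 0 1) :=
    Measure.restrict_apply' measurableSet_Icc
  have hmesT : S.mes {x | S.psi x ≤ t} = volume ({x | S.psi x ≤ t} ∩ Icc 0 1) :=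
    Measure.restrict_apply' measurableSet_Icc
  have hdisj : Disjoint ({x | S.psi x ≤ s} ∩ Icc 0 1) A := by
    rw [Set.disjoint_left]
    rintro x ⟨hx1, _⟩ hxA
    exact absurd hx1 (not_le.mpr (hpsiA x hxA).1)
  have hsub : ({x | S.psi x ≤ s} ∩ Icc 0 1) ∪ A ⊆ {x | S.psi x ≤ t} ∩ Icc 0 1 := by
    rintro x (⟨hx1, hx2⟩ | hxA)
    · exact ⟨le_trans hx1 hst.le, hx2⟩
    · exact ⟨(hpsiA x hxA).2, hAsub hxA⟩
  have hle : S.mes {x | S.psi x ≤ s} + volume A ≤ S.mes {x | S.psi x ≤ t} := by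
    rw [hmesS, hmesT, ← measure_union hdisj hAm]
    exact measure_mono hsub
  have hfinT : S.mes {x | S.psi x ≤ t} ≠ ⊤ := by
    rw [hmesT]
    exact ne_top_of_le_ne_top (by simp : volume (Icc (0:ℝ) 1) ≠ ⊤)
      (measure_mono inter_subset_right)
  have hfinS : S.mes {x | S.psi x ≤ s} ≠ ⊤ :=
    ne_top_of_le_ne_top hfinT (le_trans (le_add_right le_rfl) hle)
  have hlt : S.mes {x | S.psi x ≤ s} < S.mes {x | S.psi x ≤ t} :=
    lt_of_lt_of_le (ENNReal.lt_add_right hfinS hApos.ne') hle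
  exact (ENNReal.toReal_lt_toReal hfinS hfinT).mpr hlt
end

section
/- The random variable F∘ψ is uniformly distributed on [0,1]: for every z ∈ [0,1], 𝔪{x ∈ [0,1] : F(ψ(x)) ≤ z} = z; equivalently, the pushforward of 𝔪 under F∘ψ is Lebesgue measure on [0,1]. (Paper's Lemma 2.2(c)(iii).) -/
open Set MeasureTheory Filter
open scoped ENNReal Topology Classical

namespace CantorProofAux

variable (S : CantorData)

lemma a_mono : ∀ {j k : ℕ}, j ≤ k → k ≤ 2 * S.kI - 1 → S.a j ≤ S.a k := by
  intro j k hjk hk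
  induction k with
  | zero => simp_all
  | succ m ih =>
    rcases Nat.lt_or_ge j (m+1) with h | h
    · have hm : m + 1 < 2 * S.kI := by omega
      have := S.ha_lt m hm
      have h2 : m ≤ 2 * S.kI - 1 := by omega
      exact le_trans (ih (by omega) h2) this.le
    · have : j = m + 1 := by omega
      simp [this]

lemma a_lt (j k : ℕ) (hjk : j < k) (hk : k ≤ 2 * S.kI - 1) : S.a j < S.a k := by
  have h1 : S.a j ≤ S.a (k - 1) := a_mono S (by omega) (by omega)
  have h2 : S.a (k - 1) < S.a (k - 1 + 1) := S.ha_lt _ (by omega)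
  have : k - 1 + 1 = k := by omega
  rw [this] at h2
  exact lt_of_le_of_lt h1 h2

lemma a_mem (k : ℕ) (hk : k ≤ 2 * S.kI - 1) : S.a k ∈ Set.Icc (0:ℝ) 1 :=
  ⟨le_trans S.ha0 (a_mono S (Nat.zero_le _) hk), le_trans (a_mono S hk le_rfl) S.ha1⟩

lemma IU_mem_iff (x : ℝ) : x ∈ S.IU ↔ ∃ i < S.kI, S.a (2*i) ≤ x ∧ x ≤ S.a (2*i+1) := by
  simp only [CantorData.IU, Set.mem_iUnion, Finset.mem_range, exists_prop, Set.mem_Icc,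
    Finset.mem_coe]

lemma IU_subset : S.IU ⊆ Set.Icc (0:ℝ) 1 := by
  intro x hx
  rw [IU_mem_iff] at hx
  obtain ⟨i, hi, h1, h2⟩ := hx
  have ha := S.hkI
  exact ⟨le_trans (a_mem S (2*i) (by omega)).1 h1, le_trans h2 (a_mem S (2*i+1) (by omega)).2⟩

lemma IU_measurable : MeasurableSet S.IU := by
  apply Set.Finite.measurableSet_biUnion
  · exact (Finset.range S.kI).finite_toSet
  · intro i _; exact measurableSet_Icc

/-- The complementary pieces. -/
def JL : Set ℝ := Set.Ico 0 (S.a 0)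
def JR : Set ℝ := Set.Ioc (S.a (2 * S.kI - 1)) 1
def JM (i : ℕ) : Set ℝ := Set.Ioo (S.a (2 * i + 1)) (S.a (2 * i + 2))

/-- Covering lemma: the complement of `IU` in `[0,1]` is the union of the `J` pieces. -/
lemma compl_eq : Set.Icc (0:ℝ) 1 \ S.IU =
    JL S ∪ (⋃ i ∈ Finset.range (S.kI - 1), JM S i) ∪ JR S := by
  have hkI := S.hkI
  ext x
  simp only [Set.mem_diff, Set.mem_union, JL, JR, JM, Set.mem_Ico, Set.mem_Ioc, Set.mem_Ioo,
    Set.mem_Icc, Set.mem_iUnion, exists_prop, Finset.mem_range, Finset.mem_coe, IU_mem_iff]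
  constructor
  · rintro ⟨⟨hx0, hx1⟩, hnot⟩
    push_neg at hnot
    by_cases hL : x < S.a 0
    · exact Or.inl (Or.inl ⟨hx0, hL⟩)
    by_cases hR : S.a (2 * S.kI - 1) < x
    · exact Or.inr ⟨hR, hx1⟩
    push_neg at hL hR
    have hset : ∃ j, j ≤ 2 * S.kI - 1 ∧ S.a j ≤ x := ⟨0, by omega, hL⟩
    classical
    obtain ⟨j, hj, hjmax⟩ : ∃ j, (j ≤ 2 * S.kI - 1 ∧ S.a j ≤ x) ∧
        ∀ m, j < m → m ≤ 2 * S.kI - 1 → ¬ S.a m ≤ x := by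
      have hbdd : ∀ j ∈ {j | j ≤ 2 * S.kI - 1 ∧ S.a j ≤ x}, j ≤ 2 * S.kI - 1 :=
        fun j hj => hj.1
      obtain ⟨j, hjmem, hjmax⟩ := Set.Finite.exists_maximalFor id _
        (Set.Finite.subset (Set.finite_Iic (2 * S.kI - 1)) hbdd) hset
      refine ⟨j, hjmem, fun m hjm hm hma => ?_⟩
      have := hjmax (j := m) ⟨hm, hma⟩ (le_of_lt hjm)
      simp only [id] at this
      omega
    rcases Nat.even_or_odd j with ⟨i, hi⟩ | ⟨i, hi⟩
    · exfalso
      have hik : i < S.kI := by omega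
      have hji : j = 2 * i := by omega
      subst hji
      have hlt := hnot i hik hj.2
      exact hjmax (2 * i + 1) (by omega) (by omega) hlt.le
    · have hji : j = 2 * i + 1 := by omega
      subst hji
      have hik : i < S.kI := by omega
      by_cases heq : x = S.a (2 * i + 1)
      · exfalso
        have h1 : S.a (2 * i) ≤ S.a (2 * i + 1) := (S.ha_lt _ (by omega)).le
        have := hnot i hik (heq ▸ h1)
        rw [heq] at this
        exact lt_irrefl _ this
      · have hlt : S.a (2 * i + 1) < x := lt_of_le_of_ne hj.2 (Ne.symm heq)
        have hne : 2 * i + 1 ≠ 2 * S.kI - 1 := by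
          intro h
          rw [h] at hlt
          exact absurd hR (not_le.mpr hlt)
        refine Or.inl (Or.inr ⟨i, by omega, hlt, ?_⟩)
        by_contra hge
        push_neg at hge
        exact hjmax (2 * i + 2) (by omega) (by omega) hge
  · intro h
    have hIU : ∀ i < S.kI, S.a (2*i) ≤ x → x ≤ S.a (2*i+1) → False := by
      intro i hik hxi1 hxi2
      rcases h with (⟨hx0, hxa⟩ | ⟨m, hm, hm1, hm2⟩) | ⟨hxa, hx1⟩
      · have : S.a 0 ≤ S.a (2*i) := a_mono S (by omega) (by omega)
        linarith
      · rcases Nat.lt_or_ge i (m+1) with him | him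
        · have : S.a (2*i+1) ≤ S.a (2*m+1) := a_mono S (by omega) (by omega)
          linarith
        · have : S.a (2*m+2) ≤ S.a (2*i) := a_mono S (by omega) (by omega)
          linarith
      · have : S.a (2*i+1) ≤ S.a (2*S.kI-1) := a_mono S (by omega) (by omega)
        linarith
    constructor
    · rcases h with (⟨hx0, hxa⟩ | ⟨m, hm, hm1, hm2⟩) | ⟨hxa, hx1⟩
      · exact ⟨hx0, le_trans hxa.le (a_mem S 0 (by omega)).2⟩
      · exact ⟨le_trans (a_mem S (2*m+1) (by omega)).1 hm1.le,
          le_trans hm2.le (a_mem S (2*m+2) (by omega)).2⟩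
      · exact ⟨le_trans (a_mem S (2*S.kI-1) (by omega)).1 hxa.le, hx1⟩
    · rintro ⟨i, hik, h1, h2⟩
      exact hIU i hik h1 h2


lemma volume_affine_preimage (s c : ℝ) (hs : s ≠ 0) (A : Set ℝ) :
    volume ((fun x => s * x + c) ⁻¹' A) = ENNReal.ofReal |s⁻¹| * volume A := by
  have h1 : (fun x : ℝ => s * x + c) ⁻¹' A = (fun x : ℝ => s * x) ⁻¹' ((fun y : ℝ => y + c) ⁻¹' A) := by
    ext x; simp [Set.mem_preimage]
  rw [h1, Real.volume_preimage_mul_left hs, measure_preimage_add_right]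

/-- Telescoping identity. -/
lemma tele : ∀ k : ℕ, 1 ≤ k →
    (∑ i ∈ Finset.range k, (S.a (2*i+1) - S.a (2*i))) +
    (∑ i ∈ Finset.range (k-1), (S.a (2*i+2) - S.a (2*i+1))) = S.a (2*k-1) - S.a 0 := by
  intro k hk
  induction k with
  | zero => omega
  | succ m ih =>
    rcases Nat.eq_or_lt_of_le hk with h | h
    · simp [← h]
    · have hm : 1 ≤ m := by omega
      have hred : m + 1 - 1 = m - 1 + 1 := by omega
      have h2 : 2 * (m-1) + 2 = 2 * m := by omega
      have h3 : 2 * (m-1) + 1 = 2 * m - 1 := by omega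
      have h4 : 2 * (m+1) - 1 = 2 * m + 1 := by omega
      rw [Finset.sum_range_succ, hred, Finset.sum_range_succ, h2, h3, h4]
      have := ih hm
      linarith

/-- The `J`-measure. -/
noncomputable def lamJ : ℝ :=
  S.a 0 + (∑ i ∈ Finset.range (S.kI - 1), (S.a (2*i+2) - S.a (2*i+1))) + (1 - S.a (2*S.kI-1))

lemma lam_add_lamJ : S.lam + lamJ S = 1 := by
  have := tele S S.kI S.hkI
  rw [CantorData.lam, lamJ]
  linarith

lemma lam_pos : 0 < S.lam := by
  rw [CantorData.lam]
  apply Finset.sum_pos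
  · intro i hi
    simp only [Finset.mem_range] at hi
    have := S.ha_lt (2*i) (by omega)
    linarith
  · exact ⟨0, Finset.mem_range.mpr S.hkI⟩

lemma gap_nonneg (i : ℕ) (hi : i ∈ Finset.range (S.kI - 1)) :
    0 ≤ S.a (2*i+2) - S.a (2*i+1) := by
  simp only [Finset.mem_range] at hi
  have := S.ha_lt (2*i+1) (by omega)
  linarith

lemma lamJ_pos : 0 < lamJ S := by
  obtain ⟨x, hx⟩ := S.hkJ
  have hx' : x ∈ Set.Icc (0:ℝ) 1 \ S.IU := hx
  rw [compl_eq] at hx'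
  have hsum : 0 ≤ ∑ i ∈ Finset.range (S.kI - 1), (S.a (2*i+2) - S.a (2*i+1)) :=
    Finset.sum_nonneg (gap_nonneg S)
  have hA0 : 0 ≤ S.a 0 := S.ha0
  have hA1 : 0 ≤ 1 - S.a (2*S.kI-1) := by linarith [S.ha1]
  rcases hx' with (h | h) | h
  · have : 0 < S.a 0 := lt_of_le_of_lt h.1 h.2
    rw [lamJ]; linarith
  · simp only [Set.mem_iUnion, exists_prop, Finset.mem_range, Finset.mem_coe, JM,
      Set.mem_Ioo] at h
    obtain ⟨i, hi, h1, h2⟩ := h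
    have hpos : 0 < S.a (2*i+2) - S.a (2*i+1) := by linarith
    have : S.a (2*i+2) - S.a (2*i+1) ≤
        ∑ j ∈ Finset.range (S.kI - 1), (S.a (2*j+2) - S.a (2*j+1)) :=
      Finset.single_le_sum (gap_nonneg S) (Finset.mem_range.mpr hi)
    rw [lamJ]; linarith
  · have : S.a (2*S.kI-1) < 1 := lt_of_lt_of_le h.1 h.2
    rw [lamJ]; linarith

lemma lam_lt_one : S.lam < 1 := by
  have := lam_add_lamJ S
  have := lamJ_pos S
  linarith


lemma piece_bound (P : Set ℝ) (hP : MeasurableSet P) (s c L : ℝ) (hsL : |s| * L = 1)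
    (hG : ∀ x ∈ P, S.G x = s * x + c) (A : Set ℝ) (hA : MeasurableSet A) :
    MeasurableSet (P ∩ S.G ⁻¹' A) ∧
      volume (P ∩ S.G ⁻¹' A) ≤ ENNReal.ofReal L * volume A := by
  have hs : s ≠ 0 := by
    intro h; rw [h] at hsL; simp at hsL
  have habs : (0:ℝ) < |s| := abs_pos.mpr hs
  have hLs : L = |s|⁻¹ := by field_simp; linarith
  have hinv : |s⁻¹| = L := by rw [abs_inv, hLs]
  have heq : P ∩ S.G ⁻¹' A = P ∩ (fun x => s * x + c) ⁻¹' A := by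
    ext x
    simp only [Set.mem_inter_iff, Set.mem_preimage]
    exact ⟨fun ⟨h1, h2⟩ => ⟨h1, by rw [← hG x h1]; exact h2⟩,
      fun ⟨h1, h2⟩ => ⟨h1, by rw [hG x h1]; exact h2⟩⟩
  have hmaff : Measurable (fun x : ℝ => s * x + c) :=
    (measurable_id.const_mul s).add_const c
  refine ⟨by rw [heq]; exact hP.inter (hmaff hA), ?_⟩
  rw [heq]
  calc volume (P ∩ (fun x => s * x + c) ⁻¹' A)
      ≤ volume ((fun x => s * x + c) ⁻¹' A) := measure_mono Set.inter_subset_right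
    _ = ENNReal.ofReal |s⁻¹| * volume A := volume_affine_preimage s c hs A
    _ = ENNReal.ofReal L * volume A := by rw [hinv]

lemma core_in (A : Set ℝ) (hA : MeasurableSet A) :
    MeasurableSet (S.IU ∩ S.G ⁻¹' A) ∧
      volume (S.IU ∩ S.G ⁻¹' A) ≤ ENNReal.ofReal S.lam * volume A := by
  classical
  have hdecomp : S.IU ∩ S.G ⁻¹' A =
      ⋃ i ∈ Finset.range S.kI,
        (Set.Icc (S.a (2*i)) (S.a (2*i+1)) ∩ S.G ⁻¹' A) := by
    rw [CantorData.IU, Set.iUnion₂_inter]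
  have hpieces : ∀ i < S.kI,
      MeasurableSet (Set.Icc (S.a (2*i)) (S.a (2*i+1)) ∩ S.G ⁻¹' A) ∧
      volume (Set.Icc (S.a (2*i)) (S.a (2*i+1)) ∩ S.G ⁻¹' A) ≤
        ENNReal.ofReal (S.a (2*i+1) - S.a (2*i)) * volume A := by
    intro i hi
    obtain ⟨s, c, hsL, hGf, _⟩ := S.hGI i hi
    exact piece_bound S _ measurableSet_Icc s c _ hsL hGf A hA
  constructor
  · rw [hdecomp]
    exact (Finset.range S.kI).measurableSet_biUnion
      (fun i hi => (hpieces i (Finset.mem_range.mp hi)).1)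
  · rw [hdecomp]
    calc volume (⋃ i ∈ Finset.range S.kI, (Set.Icc (S.a (2*i)) (S.a (2*i+1)) ∩ S.G ⁻¹' A))
        ≤ ∑ i ∈ Finset.range S.kI,
            volume (Set.Icc (S.a (2*i)) (S.a (2*i+1)) ∩ S.G ⁻¹' A) :=
          measure_biUnion_finset_le _ _
      _ ≤ ∑ i ∈ Finset.range S.kI,
            ENNReal.ofReal (S.a (2*i+1) - S.a (2*i)) * volume A :=
          Finset.sum_le_sum (fun i hi => (hpieces i (Finset.mem_range.mp hi)).2)
      _ = (∑ i ∈ Finset.range S.kI, ENNReal.ofReal (S.a (2*i+1) - S.a (2*i))) * volume A :=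
          (Finset.sum_mul _ _ _).symm
      _ = ENNReal.ofReal S.lam * volume A := by
          rw [CantorData.lam, ENNReal.ofReal_sum_of_nonneg]
          intro i hi
          have := S.ha_lt (2*i) (by simp only [Finset.mem_range] at hi; omega)
          linarith

lemma core_out (A : Set ℝ) (hA : MeasurableSet A) :
    MeasurableSet ((Set.Icc (0:ℝ) 1 \ S.IU) ∩ S.G ⁻¹' A) ∧
      volume ((Set.Icc (0:ℝ) 1 \ S.IU) ∩ S.G ⁻¹' A) ≤
        ENNReal.ofReal (lamJ S) * volume A := by
  classical
  have hL : MeasurableSet (JL S ∩ S.G ⁻¹' A) ∧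
      volume (JL S ∩ S.G ⁻¹' A) ≤ ENNReal.ofReal (S.a 0) * volume A := by
    by_cases h0 : 0 < S.a 0
    · obtain ⟨s, c, hsL, hGf, _⟩ := S.hGJleft h0
      exact piece_bound S _ measurableSet_Ico s c _ hsL hGf A hA
    · rw [JL, Set.Ico_eq_empty h0]
      simp
  have hR : MeasurableSet (JR S ∩ S.G ⁻¹' A) ∧
      volume (JR S ∩ S.G ⁻¹' A) ≤ ENNReal.ofReal (1 - S.a (2*S.kI-1)) * volume A := by
    by_cases h0 : S.a (2*S.kI-1) < 1
    · obtain ⟨s, c, hsL, hGf, _⟩ := S.hGJright h0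
      exact piece_bound S _ measurableSet_Ioc s c _ hsL hGf A hA
    · rw [JR, Set.Ioc_eq_empty h0]
      simp
  have hM : ∀ i < S.kI - 1, MeasurableSet (JM S i ∩ S.G ⁻¹' A) ∧
      volume (JM S i ∩ S.G ⁻¹' A) ≤
        ENNReal.ofReal (S.a (2*i+2) - S.a (2*i+1)) * volume A := by
    intro i hi
    obtain ⟨s, c, hsL, hGf, _⟩ := S.hGJmid i (by omega)
    exact piece_bound S _ measurableSet_Ioo s c _ hsL hGf A hA
  have hdecomp : (Set.Icc (0:ℝ) 1 \ S.IU) ∩ S.G ⁻¹' A =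
      (JL S ∩ S.G ⁻¹' A) ∪ (⋃ i ∈ Finset.range (S.kI - 1), (JM S i ∩ S.G ⁻¹' A)) ∪
      (JR S ∩ S.G ⁻¹' A) := by
    rw [compl_eq, Set.union_inter_distrib_right, Set.union_inter_distrib_right,
      Set.iUnion₂_inter]
  constructor
  · rw [hdecomp]
    exact ((hL.1.union ((Finset.range (S.kI-1)).measurableSet_biUnion
      (fun i hi => (hM i (Finset.mem_range.mp hi)).1))).union hR.1)
  · rw [hdecomp]
    have hMsum : volume (⋃ i ∈ Finset.range (S.kI - 1), (JM S i ∩ S.G ⁻¹' A)) ≤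
        (∑ i ∈ Finset.range (S.kI - 1), ENNReal.ofReal (S.a (2*i+2) - S.a (2*i+1)))
          * volume A := by
      calc volume (⋃ i ∈ Finset.range (S.kI - 1), (JM S i ∩ S.G ⁻¹' A))
          ≤ ∑ i ∈ Finset.range (S.kI - 1), volume (JM S i ∩ S.G ⁻¹' A) :=
            measure_biUnion_finset_le _ _
        _ ≤ ∑ i ∈ Finset.range (S.kI - 1),
              ENNReal.ofReal (S.a (2*i+2) - S.a (2*i+1)) * volume A :=
            Finset.sum_le_sum (fun i hi => (hM i (Finset.mem_range.mp hi)).2)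
        _ = _ := (Finset.sum_mul _ _ _).symm
    calc volume _ ≤ volume (JL S ∩ S.G ⁻¹' A) +
          volume (⋃ i ∈ Finset.range (S.kI - 1), (JM S i ∩ S.G ⁻¹' A)) +
          volume (JR S ∩ S.G ⁻¹' A) := by
            exact le_trans (measure_union_le _ _)
              (add_le_add_left (measure_union_le _ _) _)
      _ ≤ ENNReal.ofReal (S.a 0) * volume A +
          (∑ i ∈ Finset.range (S.kI - 1), ENNReal.ofReal (S.a (2*i+2) - S.a (2*i+1)))
            * volume A +
          ENNReal.ofReal (1 - S.a (2*S.kI-1)) * volume A :=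
            add_le_add (add_le_add hL.2 hMsum) hR.2
      _ = ENNReal.ofReal (lamJ S) * volume A := by
          rw [← add_mul, ← add_mul]
          congr 1
          rw [lamJ, ENNReal.ofReal_add, ENNReal.ofReal_add, ENNReal.ofReal_sum_of_nonneg]
          · exact gap_nonneg S
          · exact S.ha0
          · exact Finset.sum_nonneg (gap_nonneg S)
          · have hs := Finset.sum_nonneg (gap_nonneg S)
            have := S.ha0
            linarith
          · linarith [S.ha1]


/-- The contraction factor. -/
noncomputable def p : ℝ := max S.lam (lamJ S)

lemma p_nonneg : 0 ≤ p S := le_trans (lam_pos S).le (le_max_left _ _)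

lemma p_lt_one : p S < 1 := by
  have h1 := lam_lt_one S
  have h2 := lam_add_lamJ S
  have h3 := lam_pos S
  rw [p]
  apply max_lt h1
  linarith

/-- Points with a prescribed itinerary pattern for the first `n` steps. -/
def Eset (ε : ℕ → Bool) (n : ℕ) : Set ℝ :=
  {x ∈ Set.Icc (0:ℝ) 1 | ∀ i < n, ((S.G^[i] x ∈ S.IU) ↔ ε i = true)}

lemma Eset_succ (ε : ℕ → Bool) (n : ℕ) :
    Eset S ε (n+1) = (if ε 0 then S.IU else (Set.Icc (0:ℝ) 1 \ S.IU)) ∩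
      S.G ⁻¹' (Eset S (fun i => ε (i+1)) n) := by
  ext x
  simp only [Eset, Set.mem_sep_iff, Set.mem_inter_iff, Set.mem_preimage]
  constructor
  · rintro ⟨hx, hit⟩
    have hGx : S.G x ∈ Set.Icc (0:ℝ) 1 := S.hGmaps hx
    have h0 := hit 0 (Nat.succ_pos n)
    simp only [Function.iterate_zero_apply] at h0
    refine ⟨?_, hGx, fun i hi => ?_⟩
    · cases hε : ε 0 with
      | true => simp only [if_pos]; exact h0.mpr hε; 
      | false => 
        simp only [hε, if_neg Bool.false_ne_true]
        exact ⟨hx, fun hmem => by simp [h0.mp hmem] at hε⟩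
    · rw [← Function.iterate_succ_apply]
      exact hit (i+1) (by omega)
  · rintro ⟨hx0, hGx, hit⟩
    have hx : x ∈ Set.Icc (0:ℝ) 1 := by
      cases hε : ε 0 with
      | true => rw [hε, if_pos rfl] at hx0; exact IU_subset S hx0
      | false => rw [hε, if_neg Bool.false_ne_true] at hx0; exact hx0.1
    refine ⟨hx, fun i hi => ?_⟩
    cases i with
    | zero =>
      simp only [Function.iterate_zero_apply]
      cases hε : ε 0 with
      | true => rw [hε, if_pos rfl] at hx0; simp [hx0]
      | false => rw [hε, if_neg Bool.false_ne_true] at hx0; simp [hx0.2]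
    | succ j =>
      rw [Function.iterate_succ_apply]
      exact hit j (by omega)

lemma Eset_bound (n : ℕ) : ∀ ε : ℕ → Bool, MeasurableSet (Eset S ε n) ∧
    Eset S ε n ⊆ Set.Icc (0:ℝ) 1 ∧ volume (Eset S ε n) ≤ ENNReal.ofReal ((p S)^n) := by
  induction n with
  | zero =>
    intro ε
    have : Eset S ε 0 = Set.Icc (0:ℝ) 1 := by
      ext x; simp [Eset]
    rw [this]
    refine ⟨measurableSet_Icc, le_rfl, ?_⟩
    rw [Real.volume_Icc, pow_zero]
    norm_num
  | succ n ih =>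
    intro ε
    obtain ⟨hm, hsub, hvol⟩ := ih (fun i => ε (i+1))
    rw [Eset_succ]
    cases hε : ε 0 with
    | true =>
      simp only [if_pos rfl]
      obtain ⟨hm', hv'⟩ := core_in S _ hm
      refine ⟨hm', fun x hx => IU_subset S hx.1, ?_⟩
      calc volume (S.IU ∩ S.G ⁻¹' (Eset S (fun i => ε (i+1)) n))
          ≤ ENNReal.ofReal S.lam * volume (Eset S (fun i => ε (i+1)) n) := hv'
        _ ≤ ENNReal.ofReal S.lam * ENNReal.ofReal ((p S)^n) := by
            exact mul_le_mul_right hvol _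
        _ ≤ ENNReal.ofReal ((p S)^(n+1)) := by
            rw [← ENNReal.ofReal_mul (lam_pos S).le]
            apply ENNReal.ofReal_le_ofReal
            rw [pow_succ']
            apply mul_le_mul_of_nonneg_right (le_max_left _ _)
            exact pow_nonneg (p_nonneg S) n
    | false =>
      simp only [if_neg Bool.false_ne_true]
      obtain ⟨hm', hv'⟩ := core_out S _ hm
      refine ⟨hm', fun x hx => hx.1.1, ?_⟩
      calc volume ((Set.Icc (0:ℝ) 1 \ S.IU) ∩ S.G ⁻¹' (Eset S (fun i => ε (i+1)) n))
          ≤ ENNReal.ofReal (lamJ S) * volume (Eset S (fun i => ε (i+1)) n) := hv'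
        _ ≤ ENNReal.ofReal (lamJ S) * ENNReal.ofReal ((p S)^n) := by
            exact mul_le_mul_right hvol _
        _ ≤ ENNReal.ofReal ((p S)^(n+1)) := by
            rw [← ENNReal.ofReal_mul (lamJ_pos S).le]
            apply ENNReal.ofReal_le_ofReal
            rw [pow_succ']
            apply mul_le_mul_of_nonneg_right (le_max_right _ _)
            exact pow_nonneg (p_nonneg S) n

lemma iter_pre (B : Set ℝ) (hB : MeasurableSet B) (hBs : B ⊆ Set.Icc (0:ℝ) 1) :
    ∀ i, MeasurableSet ((S.G^[i]) ⁻¹' B ∩ Set.Icc (0:ℝ) 1) := by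
  intro i
  induction i generalizing B with
  | zero =>
    simpa using hB.inter measurableSet_Icc
  | succ j ih =>
    have hC : MeasurableSet ((S.G^[j]) ⁻¹' B ∩ Set.Icc (0:ℝ) 1) := ih B hB hBs
    set C := (S.G^[j]) ⁻¹' B ∩ Set.Icc (0:ℝ) 1 with hCdef
    have hdecomp : (S.G^[j+1]) ⁻¹' B ∩ Set.Icc (0:ℝ) 1 =
        (S.IU ∩ S.G ⁻¹' C) ∪ ((Set.Icc (0:ℝ) 1 \ S.IU) ∩ S.G ⁻¹' C) := by
      ext x
      simp only [Set.mem_inter_iff, Set.mem_preimage, Set.mem_union, Set.mem_diff,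
        Function.iterate_succ_apply, hCdef]
      constructor
      · rintro ⟨hxB, hx⟩
        have hGx : S.G x ∈ Set.Icc (0:ℝ) 1 := S.hGmaps hx
        by_cases hIU : x ∈ S.IU
        · exact Or.inl ⟨hIU, hxB, hGx⟩
        · exact Or.inr ⟨⟨hx, hIU⟩, hxB, hGx⟩
      · rintro (⟨hIU, hxB, _⟩ | ⟨⟨hx, _⟩, hxB, _⟩)
        · exact ⟨hxB, IU_subset S hIU⟩
        · exact ⟨hxB, hx⟩
    rw [hdecomp]
    exact (core_in S C hC).1.union (core_out S C hC).1


/-- Summand of `psi`. -/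
noncomputable def term (i : ℕ) (x : ℝ) : ℝ :=
  if S.G^[i] x ∈ S.IU then 0 else (2:ℝ)⁻¹ ^ (i + 1)

lemma psi_eq_tsum_term (x : ℝ) : S.psi x = ∑' i, term S i x := rfl

lemma term_nonneg (i : ℕ) (x : ℝ) : 0 ≤ term S i x := by
  rw [term]; split <;> positivity

lemma term_le (i : ℕ) (x : ℝ) : term S i x ≤ (2:ℝ)⁻¹ ^ (i + 1) := by
  rw [term]; split
  · positivity
  · exact le_rfl

lemma summable_pow_succ : Summable (fun i : ℕ => (2:ℝ)⁻¹ ^ (i + 1)) := by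
  have h : Summable (fun i : ℕ => (2:ℝ)⁻¹ ^ i) :=
    summable_geometric_of_lt_one (by norm_num) (by norm_num)
  simpa [pow_succ] using h.mul_right (2:ℝ)⁻¹

lemma summable_term (x : ℝ) : Summable (fun i => term S i x) :=
  Summable.of_nonneg_of_le (term_nonneg S · x) (term_le S · x) summable_pow_succ

lemma tsum_pow_succ : ∑' i : ℕ, (2:ℝ)⁻¹ ^ (i + 1) = 1 := by
  have : ∀ i : ℕ, (2:ℝ)⁻¹ ^ (i + 1) = (2:ℝ)⁻¹ * (2:ℝ)⁻¹ ^ i := by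
    intro i; rw [pow_succ]; ring
  rw [tsum_congr this, tsum_mul_left, tsum_geometric_inv_two]
  norm_num

lemma tsum_pow_tail (n : ℕ) : ∑' i : ℕ, (2:ℝ)⁻¹ ^ (i + n + 1) = (2:ℝ)⁻¹ ^ n := by
  have : ∀ i : ℕ, (2:ℝ)⁻¹ ^ (i + n + 1) = (2:ℝ)⁻¹ ^ (i + 1) * (2:ℝ)⁻¹ ^ n := by
    intro i; rw [← pow_add]; ring_nf
  rw [tsum_congr this, tsum_mul_right, tsum_pow_succ, one_mul]

lemma psi_between (x : ℝ) (n : ℕ) :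
    (∑ i ∈ Finset.range n, term S i x) ≤ S.psi x ∧
    S.psi x ≤ (∑ i ∈ Finset.range n, term S i x) + (2:ℝ)⁻¹ ^ n := by
  have hsum := summable_term S x
  have hsplit := Summable.sum_add_tsum_nat_add (f := fun i => term S i x) n hsum
  have htail0 : 0 ≤ ∑' i, term S (i + n) x :=
    tsum_nonneg (fun i => term_nonneg S _ x)
  have htail1 : ∑' i, term S (i + n) x ≤ (2:ℝ)⁻¹ ^ n := by
    calc ∑' i, term S (i + n) x ≤ ∑' i : ℕ, (2:ℝ)⁻¹ ^ (i + n + 1) :=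
        Summable.tsum_le_tsum (fun i => term_le S _ x) (hsum.comp_injective (add_left_injective n))
          (by simpa [add_assoc, Function.comp_def] using (summable_pow_succ.comp_injective (add_left_injective n)))
      _ = (2:ℝ)⁻¹ ^ n := tsum_pow_tail n
  rw [psi_eq_tsum_term, ← hsplit]
  constructor <;> linarith

lemma psi_nonneg (x : ℝ) : 0 ≤ S.psi x :=
  tsum_nonneg (fun i => term_nonneg S i x)

lemma psi_le_one (x : ℝ) : S.psi x ≤ 1 := by
  have := (psi_between S x 0).2
  simpa using this

lemma geom_range (m : ℕ) : ∑ i ∈ Finset.range m, (2:ℝ)⁻¹ ^ (i + 1) = 1 - (2:ℝ)⁻¹ ^ m := by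
  induction m with
  | zero => simp
  | succ k ih => rw [Finset.sum_range_succ, ih, pow_succ]; ring

lemma geom_Ico (a b : ℕ) (hab : a ≤ b) :
    ∑ i ∈ Finset.Ico a b, (2:ℝ)⁻¹ ^ (i + 1) = (2:ℝ)⁻¹ ^ a - (2:ℝ)⁻¹ ^ b := by
  have := Finset.sum_Ico_eq_sub (fun i => (2:ℝ)⁻¹ ^ (i + 1)) hab
  rw [this, geom_range, geom_range]
  ring

/-- Separation: one-sided version. -/
lemma sep_one (x y : ℝ) (n j : ℕ) (hj : j < n)
    (hagree : ∀ i < j, ((S.G^[i] x ∈ S.IU) ↔ (S.G^[i] y ∈ S.IU)))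
    (hx : S.G^[j] x ∈ S.IU) (hy : S.G^[j] y ∉ S.IU) :
    (2:ℝ)⁻¹ ^ n ≤ (∑ i ∈ Finset.range n, term S i y) - (∑ i ∈ Finset.range n, term S i x) := by
  classical
  have hterm : ∀ i < j, term S i y - term S i x = 0 := by
    intro i hi
    rw [term, term]
    by_cases h : S.G^[i] x ∈ S.IU
    · rw [if_pos h, if_pos ((hagree i hi).mp h)]; ring
    · rw [if_neg h, if_neg (fun hc => h ((hagree i hi).mpr hc))]; ring
  have hj' : term S j y - term S j x = (2:ℝ)⁻¹ ^ (j + 1) := by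
    rw [term, term, if_pos hx, if_neg hy]; ring
  have hbound : ∀ i, -((2:ℝ)⁻¹ ^ (i + 1)) ≤ term S i y - term S i x := by
    intro i
    have h1 := term_nonneg S i y
    have h2 := term_le S i x
    linarith
  have hsplit : (∑ i ∈ Finset.range n, term S i y) - (∑ i ∈ Finset.range n, term S i x) =
      ∑ i ∈ Finset.range n, (term S i y - term S i x) := by
    rw [Finset.sum_sub_distrib]
  rw [hsplit, Finset.range_eq_Ico, ← Finset.sum_Ico_consecutive _ (Nat.zero_le j) hj.le]
  have hz : ∑ i ∈ Finset.Ico 0 j, (term S i y - term S i x) = 0 := by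
    apply Finset.sum_eq_zero
    intro i hi
    exact hterm i (Finset.mem_Ico.mp hi).2
  rw [hz, zero_add, Finset.sum_eq_sum_Ico_succ_bot hj, hj']
  have htail : -((2:ℝ)⁻¹ ^ (j+1) - (2:ℝ)⁻¹ ^ n) ≤
      ∑ i ∈ Finset.Ico (j+1) n, (term S i y - term S i x) := by
    calc -((2:ℝ)⁻¹ ^ (j+1) - (2:ℝ)⁻¹ ^ n)
        = ∑ i ∈ Finset.Ico (j+1) n, -((2:ℝ)⁻¹ ^ (i + 1)) := by
          rw [Finset.sum_neg_distrib, geom_Ico (j+1) n hj]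
      _ ≤ _ := Finset.sum_le_sum (fun i _ => hbound i)
  linarith

/-- Separation, absolute version. -/
lemma sep_abs (x y : ℝ) (n : ℕ)
    (h : ∃ i < n, ¬((S.G^[i] x ∈ S.IU) ↔ (S.G^[i] y ∈ S.IU))) :
    (2:ℝ)⁻¹ ^ n ≤
      |(∑ i ∈ Finset.range n, term S i x) - (∑ i ∈ Finset.range n, term S i y)| := by
  classical
  have hex : ∃ i, i < n ∧ ¬((S.G^[i] x ∈ S.IU) ↔ (S.G^[i] y ∈ S.IU)) := by
    obtain ⟨i, hi, hne⟩ := h; exact ⟨i, hi, hne⟩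
  let j := Nat.find hex
  have hjspec := Nat.find_spec hex
  have hagree : ∀ i < j, ((S.G^[i] x ∈ S.IU) ↔ (S.G^[i] y ∈ S.IU)) := by
    intro i hi
    by_contra hc
    exact Nat.find_min hex hi ⟨lt_trans hi hjspec.1, hc⟩
  by_cases hx : S.G^[j] x ∈ S.IU
  · have hy : S.G^[j] y ∉ S.IU := fun hc => hjspec.2 ⟨fun _ => hc, fun _ => hx⟩
    have := sep_one S x y n j hjspec.1 hagree hx hy
    rw [abs_sub_comm]
    exact le_trans this (le_abs_self _)
  · have hy : S.G^[j] y ∈ S.IU := by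
      by_contra hy
      exact hjspec.2 ⟨fun hc => absurd hc hx, fun hc => absurd hc hy⟩
    have := sep_one S y x n j hjspec.1 (fun i hi => (hagree i hi).symm) hy hx
    exact le_trans this (le_abs_self _)


lemma three_point (t s P0 P1 P2 : ℝ) (hs : 0 < s)
    (h0 : t - s ≤ P0 ∧ P0 ≤ t) (h1 : t - s ≤ P1 ∧ P1 ≤ t) (h2 : t - s ≤ P2 ∧ P2 ≤ t)
    (d01 : s ≤ |P0 - P1|) (d02 : s ≤ |P0 - P2|) (d12 : s ≤ |P1 - P2|) : False := by
  rcases le_abs.mp d01 with h | h <;> rcases le_abs.mp d02 with h' | h' <;>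
    rcases le_abs.mp d12 with h'' | h'' <;> linarith

/-- The prefix sums of `psi`. -/
noncomputable def pre (n : ℕ) (x : ℝ) : ℝ := ∑ i ∈ Finset.range n, term S i x

lemma pre_bounds {t : ℝ} {x : ℝ} (hx : S.psi x = t) (n : ℕ) :
    t - (2:ℝ)⁻¹ ^ n ≤ pre S n x ∧ pre S n x ≤ t := by
  have h := psi_between S x n
  rw [hx] at h
  simp only [pre]
  exact ⟨by linarith [h.2], h.1⟩

lemma mes_apply (B : Set ℝ) : S.mes B = volume (B ∩ Set.Icc 0 1) :=
  Measure.restrict_apply' measurableSet_Icc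

lemma psi_atomless (t : ℝ) : S.mes {x | S.psi x = t} = 0 := by
  classical
  have key : ∀ n : ℕ, S.mes {x | S.psi x = t} ≤ 2 * ENNReal.ofReal ((p S)^n) := by
    intro n
    rw [mes_apply]
    set A := {x | S.psi x = t} ∩ Set.Icc (0:ℝ) 1 with hA
    by_cases hne : A.Nonempty
    · obtain ⟨x₀, hx₀⟩ := hne
      have hx₀t : S.psi x₀ = t := hx₀.1
      by_cases hex : ∃ x₁ ∈ A, ∃ i < n, ¬((S.G^[i] x₁ ∈ S.IU) ↔ (S.G^[i] x₀ ∈ S.IU))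
      · obtain ⟨x₁, hx₁, hdiff⟩ := hex
        have hx₁t : S.psi x₁ = t := hx₁.1
        have hsub : A ⊆ Eset S (fun i => decide (S.G^[i] x₀ ∈ S.IU)) n ∪
            Eset S (fun i => decide (S.G^[i] x₁ ∈ S.IU)) n := by
          intro x hx
          have hxt : S.psi x = t := hx.1
          by_cases hagree0 : ∀ i < n, ((S.G^[i] x ∈ S.IU) ↔ (S.G^[i] x₀ ∈ S.IU))
          · left
            refine ⟨hx.2, fun i hi => ?_⟩
            rw [decide_eq_true_eq]
            exact hagree0 i hi
          · by_cases hagree1 : ∀ i < n, ((S.G^[i] x ∈ S.IU) ↔ (S.G^[i] x₁ ∈ S.IU))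
            · right
              refine ⟨hx.2, fun i hi => ?_⟩
              rw [decide_eq_true_eq]
              exact hagree1 i hi
            · exfalso
              push_neg at hagree0 hagree1
              obtain ⟨i0, hi0, hne0⟩ := hagree0
              obtain ⟨i1, hi1, hne1⟩ := hagree1
              have hne0' : ¬((S.G^[i0] x ∈ S.IU) ↔ (S.G^[i0] x₀ ∈ S.IU)) := by tauto
              have hne1' : ¬((S.G^[i1] x ∈ S.IU) ↔ (S.G^[i1] x₁ ∈ S.IU)) := by tauto
              have d01 := sep_abs S x x₀ n ⟨i0, hi0, hne0'⟩
              have d02 := sep_abs S x x₁ n ⟨i1, hi1, hne1'⟩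
              have d12 := sep_abs S x₁ x₀ n hdiff
              have hs : (0:ℝ) < (2:ℝ)⁻¹ ^ n := by positivity
              exact three_point t ((2:ℝ)⁻¹ ^ n) (pre S n x) (pre S n x₀) (pre S n x₁) hs
                (pre_bounds S hxt n) (pre_bounds S hx₀t n) (pre_bounds S hx₁t n)
                d01 d02 (by rw [abs_sub_comm]; exact d12)
        calc volume A ≤ volume (Eset S (fun i => decide (S.G^[i] x₀ ∈ S.IU)) n ∪
              Eset S (fun i => decide (S.G^[i] x₁ ∈ S.IU)) n) := measure_mono hsub
          _ ≤ volume (Eset S (fun i => decide (S.G^[i] x₀ ∈ S.IU)) n) +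
              volume (Eset S (fun i => decide (S.G^[i] x₁ ∈ S.IU)) n) := measure_union_le _ _
          _ ≤ ENNReal.ofReal ((p S)^n) + ENNReal.ofReal ((p S)^n) :=
              add_le_add (Eset_bound S n _).2.2 (Eset_bound S n _).2.2
          _ = 2 * ENNReal.ofReal ((p S)^n) := (two_mul _).symm
      · push_neg at hex
        have hsub : A ⊆ Eset S (fun i => decide (S.G^[i] x₀ ∈ S.IU)) n := by
          intro x hx
          refine ⟨hx.2, fun i hi => ?_⟩
          rw [decide_eq_true_eq]
          exact hex x hx i hi
        calc volume A ≤ volume (Eset S (fun i => decide (S.G^[i] x₀ ∈ S.IU)) n) :=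
              measure_mono hsub
          _ ≤ ENNReal.ofReal ((p S)^n) := (Eset_bound S n _).2.2
          _ ≤ 2 * ENNReal.ofReal ((p S)^n) := by
              nth_rewrite 1 [← one_mul (ENNReal.ofReal ((p S)^n))]
              exact mul_le_mul_left one_le_two _
    · rw [Set.not_nonempty_iff_eq_empty] at hne
      rw [hne]
      simp
  have htend : Tendsto (fun n : ℕ => 2 * ENNReal.ofReal ((p S)^n)) atTop (𝓝 0) := by
    have h1 : Tendsto (fun n : ℕ => (p S)^n) atTop (𝓝 0) :=
      tendsto_pow_atTop_nhds_zero_of_lt_one (p_nonneg S) (p_lt_one S)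
    have h2 : Tendsto (fun n : ℕ => ENNReal.ofReal ((p S)^n)) atTop (𝓝 0) := by
      rw [← ENNReal.ofReal_zero]
      exact ENNReal.tendsto_ofReal h1
    have := ENNReal.Tendsto.const_mul h2 (Or.inr (by norm_num : (2:ℝ≥0∞) ≠ ⊤))
    simpa using this
  exact le_antisymm (ge_of_tendsto' htend key) zero_le


lemma psi_aemeasurable : AEMeasurable S.psi S.mes := by
  classical
  set g : ℕ → ℝ → ℝ := fun i =>
    Set.indicator (Set.Icc (0:ℝ) 1 \ ((S.G^[i]) ⁻¹' S.IU ∩ Set.Icc 0 1))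
      (fun _ => (2:ℝ)⁻¹ ^ (i+1)) with hg
  have hgm : ∀ i, Measurable (g i) := fun i =>
    measurable_const.indicator
      (measurableSet_Icc.diff (iter_pre S S.IU (IU_measurable S) (IU_subset S) i))
  have hgeq : ∀ x ∈ Set.Icc (0:ℝ) 1, ∀ i, g i x = term S i x := by
    intro x hx i
    simp only [hg, term]
    by_cases h : S.G^[i] x ∈ S.IU
    · rw [if_pos h, Set.indicator_of_notMem]
      intro hc; exact hc.2 ⟨h, hx⟩
    · rw [if_neg h, Set.indicator_of_mem]
      exact ⟨hx, fun hc => h hc.1⟩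
  have hg0 : ∀ i x, 0 ≤ g i x := by
    intro i x
    exact Set.indicator_nonneg (fun _ _ => by positivity) x
  have hgle : ∀ i x, g i x ≤ (2:ℝ)⁻¹ ^ (i+1) := by
    intro i x
    simp only [hg]
    by_cases h : x ∈ Set.Icc (0:ℝ) 1 \ ((S.G^[i]) ⁻¹' S.IU ∩ Set.Icc 0 1)
    · rw [Set.indicator_of_mem h]
    · rw [Set.indicator_of_notMem h]; positivity
  set Ψ : ℝ → ℝ := fun x => ∑' i, g i x with hΨ
  have hΨm : Measurable Ψ := by
    apply measurable_of_tendsto_metrizable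
      (f := fun n x => ∑ i ∈ Finset.range n, g i x)
    · intro n; exact Finset.measurable_sum _ (fun i _ => hgm i)
    · rw [tendsto_pi_nhds]
      intro x
      have hsum : Summable (fun i => g i x) :=
        Summable.of_nonneg_of_le (fun i => hg0 i x) (fun i => hgle i x) summable_pow_succ
      exact hsum.hasSum.tendsto_sum_nat
  have hae : Ψ =ᵐ[S.mes] S.psi := by
    have hsub : {x | ¬ Ψ x = S.psi x} ⊆ (Set.Icc (0:ℝ) 1)ᶜ := by
      intro x hx
      intro hc
      apply hx
      rw [hΨ, psi_eq_tsum_term]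
      exact tsum_congr (fun i => hgeq x hc i)
    have : S.mes {x | ¬ Ψ x = S.psi x} = 0 := by
      apply measure_mono_null hsub
      rw [mes_apply]
      simp
    exact this
  exact hΨm.aemeasurable.congr hae


lemma mes_univ : S.mes Set.univ = 1 := by
  rw [mes_apply, Set.univ_inter, Real.volume_Icc]
  norm_num

lemma mes_prob : IsProbabilityMeasure S.mes := ⟨mes_univ S⟩

lemma mes_ne_top (B : Set ℝ) : S.mes B ≠ ⊤ := by
  have h := measure_mono (Set.subset_univ B) (μ := S.mes)
  rw [mes_univ S] at h
  exact ne_top_of_le_ne_top ENNReal.one_ne_top h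

lemma ofReal_F (t : ℝ) : ENNReal.ofReal (S.F t) = S.mes {x | S.psi x ≤ t} :=
  ENNReal.ofReal_toReal (mes_ne_top S _)

lemma F_nonneg (t : ℝ) : 0 ≤ S.F t := ENNReal.toReal_nonneg

lemma F_mono : Monotone S.F := by
  intro t s hts
  exact ENNReal.toReal_mono (mes_ne_top S _)
    (measure_mono (fun x hx => le_trans hx hts))

lemma F_of_neg {t : ℝ} (ht : t < 0) : S.F t = 0 := by
  have : {x | S.psi x ≤ t} = ∅ := by
    ext x
    simp only [Set.mem_setOf_eq, Set.mem_empty_iff_false, iff_false, not_le]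
    exact lt_of_lt_of_le ht (psi_nonneg S x)
  rw [CantorData.F, this]
  simp

lemma F_of_ge_one {t : ℝ} (ht : 1 ≤ t) : S.F t = 1 := by
  have : {x | S.psi x ≤ t} = Set.univ := by
    ext x
    simp only [Set.mem_setOf_eq, Set.mem_univ, iff_true]
    exact le_trans (psi_le_one S x) ht
  rw [CantorData.F, this, mes_univ S]
  simp

lemma F_le_one (t : ℝ) : S.F t ≤ 1 := by
  rcases le_or_gt 1 t with h | h
  · exact le_of_eq (F_of_ge_one S h)
  · exact le_trans (F_mono S h.le) (le_of_eq (F_of_ge_one S le_rfl))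

lemma preimage_Iic (s : ℝ) : S.psi ⁻¹' (Set.Iic s) = {x | S.psi x ≤ s} := rfl

lemma main_lt_one {z : ℝ} (hz0 : 0 ≤ z) (hz1 : z < 1) :
    S.mes {x | S.F (S.psi x) ≤ z} = ENNReal.ofReal z := by
  set T := {t : ℝ | S.F t ≤ z} with hT
  have hne : (-1:ℝ) ∈ T := by
    simp only [hT, Set.mem_setOf_eq, F_of_neg S (by norm_num : (-1:ℝ) < 0)]
    exact hz0
  have hub : ∀ t ∈ T, t ≤ 1 := by
    intro t ht
    by_contra hc
    push_neg at hc
    rw [hT, Set.mem_setOf_eq, F_of_ge_one S hc.le] at ht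
    linarith
  have hbdd : BddAbove T := ⟨1, hub⟩
  set t0 := sSup T with ht0
  have hIio : Set.Iio t0 ⊆ T := by
    intro s hs
    obtain ⟨u, huT, hsu⟩ := exists_lt_of_lt_csSup ⟨-1, hne⟩ hs
    exact le_trans (F_mono S hsu.le) huT
  have hIic : T ⊆ Set.Iic t0 := fun t ht => le_csSup hbdd ht
  have hm1m2 : S.mes (S.psi ⁻¹' Set.Iio t0) = S.mes (S.psi ⁻¹' Set.Iic t0) := by
    apply le_antisymm (measure_mono (Set.preimage_mono Set.Iio_subset_Iic_self))
    have hsplit : S.psi ⁻¹' Set.Iic t0 ⊆ S.psi ⁻¹' Set.Iio t0 ∪ {x | S.psi x = t0} := by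
      intro x hx
      have hx' : S.psi x ≤ t0 := hx
      rcases lt_or_eq_of_le hx' with h | h
      · exact Or.inl h
      · exact Or.inr h
    calc S.mes (S.psi ⁻¹' Set.Iic t0)
        ≤ S.mes (S.psi ⁻¹' Set.Iio t0) + S.mes {x | S.psi x = t0} :=
          le_trans (measure_mono hsplit) (measure_union_le _ _)
      _ = S.mes (S.psi ⁻¹' Set.Iio t0) := by rw [psi_atomless S t0, add_zero]
  have hupper : S.mes (S.psi ⁻¹' Set.Iio t0) ≤ ENNReal.ofReal z := by
    have hun : S.psi ⁻¹' Set.Iio t0 =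
        ⋃ n : ℕ, S.psi ⁻¹' Set.Iic (t0 - 1/(n+1)) := by
      ext x
      simp only [Set.mem_preimage, Set.mem_Iio, Set.mem_iUnion, Set.mem_Iic]
      constructor
      · intro h
        obtain ⟨n, hn⟩ := exists_nat_one_div_lt (sub_pos.mpr h)
        exact ⟨n, by linarith⟩
      · rintro ⟨n, hn⟩
        have : (0:ℝ) < 1/(n+1) := by positivity
        linarith
    rw [hun]
    have hmono : Monotone (fun n : ℕ => S.psi ⁻¹' Set.Iic (t0 - 1/(n+1))) := by
      intro n m hnm
      apply Set.preimage_mono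
      apply Set.Iic_subset_Iic.mpr
      have h1 : (1:ℝ)/(m+1) ≤ 1/(n+1) := by
        apply div_le_div_of_nonneg_left one_pos.le (by positivity)
        exact_mod_cast by omega
      linarith
    rw [hmono.measure_iUnion]
    apply iSup_le
    intro n
    have hlt : t0 - 1/(n+1) < t0 := by
      have : (0:ℝ) < 1/(n+1) := by positivity
      linarith
    have hmem : (t0 - 1/(n+1)) ∈ T := hIio hlt
    rw [preimage_Iic, ← ofReal_F]
    exact ENNReal.ofReal_le_ofReal hmem
  have hlower : ENNReal.ofReal z ≤ S.mes (S.psi ⁻¹' Set.Iic t0) := by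
    have hin : S.psi ⁻¹' Set.Iic t0 =
        ⋂ n : ℕ, S.psi ⁻¹' Set.Iic (t0 + 1/(n+1)) := by
      ext x
      simp only [Set.mem_preimage, Set.mem_Iic, Set.mem_iInter]
      constructor
      · intro h n
        have : (0:ℝ) < 1/(n+1) := by positivity
        linarith
      · intro h
        by_contra hc
        push_neg at hc
        obtain ⟨n, hn⟩ := exists_nat_one_div_lt (sub_pos.mpr hc)
        have := h n
        linarith
    rw [hin]
    have hanti : Antitone (fun n : ℕ => S.psi ⁻¹' Set.Iic (t0 + 1/(n+1))) := by
      intro n m hnm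
      apply Set.preimage_mono
      apply Set.Iic_subset_Iic.mpr
      have h1 : (1:ℝ)/(m+1) ≤ 1/(n+1) := by
        apply div_le_div_of_nonneg_left one_pos.le (by positivity)
        exact_mod_cast by omega
      linarith
    rw [hanti.measure_iInter
        (fun n => (psi_aemeasurable S).nullMeasurable measurableSet_Iic)
        ⟨0, mes_ne_top S _⟩]
    apply le_iInf
    intro n
    have hgt : t0 < t0 + 1/(n+1) := by
      have : (0:ℝ) < 1/(n+1) := by positivity
      linarith
    have hnotmem : (t0 + 1/(n+1)) ∉ T := fun hc => absurd (hIic hc) (not_le.mpr hgt)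
    rw [hT, Set.mem_setOf_eq, not_le] at hnotmem
    rw [preimage_Iic, ← ofReal_F]
    exact ENNReal.ofReal_le_ofReal hnotmem.le
  have hupper' : S.mes (S.psi ⁻¹' Set.Iic t0) ≤ ENNReal.ofReal z := by
    rw [← hm1m2]; exact hupper
  have heq : S.mes (S.psi ⁻¹' Set.Iic t0) = ENNReal.ofReal z :=
    le_antisymm hupper' hlower
  have heq' : S.mes (S.psi ⁻¹' Set.Iio t0) = ENNReal.ofReal z := by
    rw [hm1m2]; exact heq
  have hsub1 : S.psi ⁻¹' Set.Iio t0 ⊆ {x | S.F (S.psi x) ≤ z} :=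
    fun x hx => hIio hx
  have hsub2 : {x | S.F (S.psi x) ≤ z} ⊆ S.psi ⁻¹' Set.Iic t0 :=
    fun x hx => hIic hx
  apply le_antisymm
  · exact le_trans (measure_mono hsub2) (le_of_eq heq)
  · exact le_trans (le_of_eq heq'.symm) (measure_mono hsub1)

lemma main_dist (z : ℝ) (hz : z ∈ Set.Icc (0:ℝ) 1) :
    S.mes {x | S.F (S.psi x) ≤ z} = ENNReal.ofReal z := by
  rcases lt_or_eq_of_le hz.2 with h | h
  · exact main_lt_one S hz.1 h
  · subst h
    have : {x | S.F (S.psi x) ≤ 1} = Set.univ := by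
      ext x
      simp only [Set.mem_setOf_eq, Set.mem_univ, iff_true]
      exact F_le_one S _
    rw [this, mes_univ S]
    norm_num


lemma F_psi_aemeasurable : AEMeasurable (fun x => S.F (S.psi x)) S.mes :=
  (F_mono S).measurable.comp_aemeasurable (psi_aemeasurable S)

end CantorProofAux

/-- `F ∘ ψ` is uniformly distributed on `[0,1]`:
`𝔪{F(ψ(x)) ≤ z} = z` for all `z ∈ [0,1]`; equivalently, the pushforward of `𝔪`
under `F ∘ ψ` is Lebesgue measure on `[0,1]`. -/
theorem F_psi_uniform (S : CantorData) :
    (∀ z ∈ Set.Icc (0:ℝ) 1,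
        S.mes {x | S.F (S.psi x) ≤ z} = ENNReal.ofReal z) ∧
    Measure.map (fun x => S.F (S.psi x)) S.mes = volume.restrict (Set.Icc 0 1) := by
  refine ⟨fun z hz => CantorProofAux.main_dist S z hz, ?_⟩
  have hae := CantorProofAux.F_psi_aemeasurable S
  haveI := CantorProofAux.mes_prob S
  haveI : IsProbabilityMeasure (Measure.map (fun x => S.F (S.psi x)) S.mes) :=
    Measure.isProbabilityMeasure_map hae
  apply Measure.ext_of_Iic
  intro t
  rw [Measure.map_apply_of_aemeasurable hae measurableSet_Iic,
    Measure.restrict_apply' measurableSet_Icc]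
  have hpre : (fun x => S.F (S.psi x)) ⁻¹' Set.Iic t = {x | S.F (S.psi x) ≤ t} := rfl
  rw [hpre]
  rcases lt_or_ge t 0 with ht | ht
  · have h1 : {x | S.F (S.psi x) ≤ t} = ∅ := by
      ext x
      simp only [Set.mem_setOf_eq, Set.mem_empty_iff_false, iff_false, not_le]
      exact lt_of_lt_of_le ht (CantorProofAux.F_nonneg S _)
    have h2 : Set.Iic t ∩ Set.Icc (0:ℝ) 1 = ∅ := by
      ext x
      simp only [Set.mem_inter_iff, Set.mem_Iic, Set.mem_Icc, Set.mem_empty_iff_false,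
        iff_false, not_and]
      intro h1' h2'
      linarith
    rw [h1, h2]
    simp
  · rcases le_or_gt t 1 with ht1 | ht1
    · rw [CantorProofAux.main_dist S t ⟨ht, ht1⟩]
      have h2 : Set.Iic t ∩ Set.Icc (0:ℝ) 1 = Set.Icc 0 t := by
        ext x
        simp only [Set.mem_inter_iff, Set.mem_Iic, Set.mem_Icc]
        constructor
        · rintro ⟨ha, hb, hc⟩; exact ⟨hb, ha⟩
        · rintro ⟨ha, hb⟩; exact ⟨hb, ha, by linarith⟩
      rw [h2, Real.volume_Icc, sub_zero]
    · have h1 : {x | S.F (S.psi x) ≤ t} = Set.univ := by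
        ext x
        simp only [Set.mem_setOf_eq, Set.mem_univ, iff_true]
        exact le_trans (CantorProofAux.F_le_one S _) ht1.le
      have h2 : Set.Iic t ∩ Set.Icc (0:ℝ) 1 = Set.Icc 0 1 := by
        apply Set.inter_eq_right.mpr
        intro x hx
        exact le_trans hx.2 ht1.le
      rw [h1, h2, CantorProofAux.mes_univ S, Real.volume_Icc]
      norm_num
end

section
/- For every n ∈ ℕ, if x ∈ Λ_n ∖ Λ_{n+1} and y ∈ Λ_{n+1} ∖ P_{n+1}, then φ_α(x) < φ_α(y). (Precise form of the paper's Lemma 2.4(b): points deeper in the construction of Λ take strictly larger φ_α-values.) -/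
open Set MeasureTheory Filter
open scoped ENNReal Topology Classical

section AuxLemmas

open Filter

/-- Pull back a nonempty open subset of `(0,1)` through an affine branch. -/
lemma cantor_pullback {G : ℝ → ℝ} {s c p q : ℝ} (hs : s ≠ 0) {D : Set ℝ}
    (hD1 : Set.Ioo p q ⊆ D) (hD2 : D ⊆ Set.Icc p q)
    (hf : ∀ x ∈ D, G x = s * x + c)
    (hsurj : Set.Ioo 0 1 ⊆ G '' D)
    {U : Set ℝ} (hU : IsOpen U) (hUne : U.Nonempty) (hUsub : U ⊆ Set.Ioo 0 1) :
    ∃ V : Set ℝ, IsOpen V ∧ V.Nonempty ∧ V ⊆ Set.Ioo p q ∧ ∀ z ∈ V, G z ∈ U := by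
  obtain ⟨u, hu⟩ := hUne
  obtain ⟨ε, hε, hball⟩ := Metric.isOpen_iff.mp hU u hu
  rw [Real.ball_eq_Ioo] at hball
  have hu1 : u - ε/2 ∈ U := hball ⟨by linarith, by linarith⟩
  have hu3 : u + ε/2 ∈ U := hball ⟨by linarith, by linarith⟩
  obtain ⟨w1, hw1D, hw1⟩ := hsurj (hUsub hu1)
  obtain ⟨w2, hw2D, hw2⟩ := hsurj (hUsub hu)
  obtain ⟨w3, hw3D, hw3⟩ := hsurj (hUsub hu3)
  have e1 : s * w1 + c = u - ε/2 := by rw [← hf w1 hw1D]; exact hw1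
  have e2 : s * w2 + c = u := by rw [← hf w2 hw2D]; exact hw2
  have e3 : s * w3 + c = u + ε/2 := by rw [← hf w3 hw3D]; exact hw3
  have hb1 := hD2 hw1D
  have hb3 := hD2 hw3D
  have hw2mem : w2 ∈ Set.Ioo p q := by
    rcases hs.lt_or_gt with hneg | hpos
    · constructor
      · have h32 : w3 < w2 := by nlinarith
        have := hb3.1; linarith
      · have h21 : w2 < w1 := by nlinarith
        have := hb1.2; linarith
    · constructor
      · have h12 : w1 < w2 := by nlinarith
        have := hb1.1; linarith
      · have h23 : w2 < w3 := by nlinarith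
        have := hb3.2; linarith
  refine ⟨(fun x => s * x + c) ⁻¹' U ∩ Set.Ioo p q, ?_, ⟨w2, ?_, hw2mem⟩, Set.inter_subset_right, ?_⟩
  · exact (hU.preimage ((continuous_const.mul continuous_id).add continuous_const)).inter isOpen_Ioo
  · show s * w2 + c ∈ U
    rw [e2]; exact hu
  · intro z hz
    rw [hf z (hD1 hz.2)]
    exact hz.1

namespace CantorData

variable (S : CantorData)

lemma aux_a_mono : ∀ {i j : ℕ}, i ≤ j → j < 2 * S.kI → S.a i ≤ S.a j := by
  intro i j
  induction j with
  | zero => intro hij _; interval_cases i; exact le_rfl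
  | succ j ih =>
    intro hij hj
    rcases Nat.lt_or_ge i (j+1) with h | h
    · exact le_trans (ih (Nat.lt_succ_iff.mp h) (by omega)) (le_of_lt (S.ha_lt j hj))
    · have : i = j + 1 := by omega
      rw [this]

lemma mem_IU_iff {x : ℝ} : x ∈ S.IU ↔ ∃ i < S.kI, S.a (2*i) ≤ x ∧ x ≤ S.a (2*i+1) := by
  simp only [IU, Set.mem_iUnion, Set.mem_Icc, Finset.mem_range, exists_prop]

/-- Existence of a `J`-branch. -/
lemma branchJ : ∃ (p q s c : ℝ) (D : Set ℝ), 0 ≤ p ∧ q ≤ 1 ∧ p < q ∧ s ≠ 0 ∧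
    Set.Ioo p q ⊆ D ∧ D ⊆ Set.Icc p q ∧ (∀ x ∈ D, S.G x = s * x + c) ∧
    Set.Ioo 0 1 ⊆ S.G '' D ∧ ∀ x ∈ Set.Ioo p q, x ∉ S.IU := by
  obtain ⟨u, huIcc, huIU⟩ := S.hkJ
  have huIU' : u ∉ S.IU := huIU
  have hkI := S.hkI
  have hlast : 2 * S.kI - 1 < 2 * S.kI := by omega
  rcases lt_or_ge u (S.a 0) with hcase | hge0
  · -- left gap
    have h0 : 0 < S.a 0 := lt_of_le_of_lt huIcc.1 hcase
    obtain ⟨s, c, hsc, hf, hsurj⟩ := S.hGJleft h0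
    refine ⟨0, S.a 0, s, c, Set.Ico 0 (S.a 0), le_refl _, ?_, h0, ?_,
      Set.Ioo_subset_Ico_self, Set.Ico_subset_Icc_self, hf, hsurj, ?_⟩
    · exact le_trans (S.aux_a_mono (Nat.zero_le _) hlast) S.ha1
    · intro hs0; rw [hs0] at hsc; simp at hsc
    · intro z hz hmem
      obtain ⟨i, hi, h1, _⟩ := (S.mem_IU_iff).mp hmem
      have : S.a 0 ≤ S.a (2*i) := S.aux_a_mono (Nat.zero_le _) (by omega)
      have := hz.2; linarith
  rcases lt_or_ge (S.a (2 * S.kI - 1)) u with hcase | hge1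
  · -- right gap
    have h1 : S.a (2 * S.kI - 1) < 1 := lt_of_lt_of_le hcase huIcc.2
    obtain ⟨s, c, hsc, hf, hsurj⟩ := S.hGJright h1
    refine ⟨S.a (2 * S.kI - 1), 1, s, c, Set.Ioc (S.a (2 * S.kI - 1)) 1,
      le_trans S.ha0 (S.aux_a_mono (Nat.zero_le _) hlast), le_refl _, h1, ?_,
      Set.Ioo_subset_Ioc_self, Set.Ioc_subset_Icc_self, hf, hsurj, ?_⟩
    · intro hs0; rw [hs0] at hsc; simp at hsc
    · intro z hz hmem
      obtain ⟨i, hi, _, h2⟩ := (S.mem_IU_iff).mp hmem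
      have : S.a (2*i+1) ≤ S.a (2 * S.kI - 1) := S.aux_a_mono (by omega) hlast
      have := hz.1; linarith
  · -- middle gap
    classical
    set P : ℕ → Prop := fun i => S.a (2*i) ≤ u with hP
    have hP0 : P 0 := hge0
    set i0 := Nat.findGreatest P (S.kI - 1) with hi0def
    have hi0P : P i0 := Nat.findGreatest_spec (Nat.zero_le _) hP0
    have hi0le : i0 ≤ S.kI - 1 := Nat.findGreatest_le _
    have hnotI : ¬ (S.a (2*i0) ≤ u ∧ u ≤ S.a (2*i0+1)) := by
      intro hc
      exact huIU' ((S.mem_IU_iff).mpr ⟨i0, by omega, hc⟩)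
    have hgt : S.a (2*i0+1) < u := by
      by_contra hc; push_neg at hc; exact hnotI ⟨hi0P, hc⟩
    have hi0lt : i0 < S.kI - 1 := by
      rcases Nat.lt_or_ge i0 (S.kI - 1) with h | h
      · exact h
      · exfalso
        have : i0 = S.kI - 1 := le_antisymm hi0le h
        have h21 : 2*i0+1 = 2 * S.kI - 1 := by omega
        rw [h21] at hgt; linarith
    have hnP : ¬ P (i0 + 1) := Nat.findGreatest_is_greatest (Nat.lt_succ_self _) (by omega)
    have hlt2 : u < S.a (2*i0+2) := by
      by_contra hc; push_neg at hc
      apply hnP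
      show S.a (2*(i0+1)) ≤ u
      have h22 : 2*(i0+1) = 2*i0+2 := by ring
      rw [h22]; exact hc
    obtain ⟨s, c, hsc, hf, hsurj⟩ := S.hGJmid i0 (by omega)
    have hpq : S.a (2*i0+1) < S.a (2*i0+2) := S.ha_lt _ (by omega)
    refine ⟨S.a (2*i0+1), S.a (2*i0+2), s, c, Set.Ioo (S.a (2*i0+1)) (S.a (2*i0+2)),
      le_trans S.ha0 (S.aux_a_mono (Nat.zero_le _) (by omega)),
      le_trans (S.aux_a_mono (show 2*i0+2 ≤ 2*S.kI - 1 by omega) hlast) S.ha1,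
      hpq, ?_, le_refl _, Set.Ioo_subset_Icc_self, hf, hsurj, ?_⟩
    · intro hs0; rw [hs0] at hsc; simp at hsc
    · intro z hz hmem
      obtain ⟨j, hj, h1, h2⟩ := (S.mem_IU_iff).mp hmem
      rcases Nat.lt_or_ge i0 j with h | h
      · have : S.a (2*i0+2) ≤ S.a (2*j) := S.aux_a_mono (by omega) (by omega)
        have := hz.2; linarith
      · have : S.a (2*j+1) ≤ S.a (2*i0+1) := S.aux_a_mono (by omega) (by omega)
        have := hz.1; linarith

/-- The first `I`-branch. -/
lemma branchI : ∃ (s c : ℝ), S.a 0 < S.a 1 ∧ s ≠ 0 ∧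
    (∀ x ∈ Set.Icc (S.a 0) (S.a 1), S.G x = s * x + c) ∧
    Set.Ioo 0 1 ⊆ S.G '' (Set.Icc (S.a 0) (S.a 1)) ∧ 0 ≤ S.a 0 ∧ S.a 1 ≤ 1 ∧
    ∀ x ∈ Set.Ioo (S.a 0) (S.a 1), x ∈ S.IU := by
  obtain ⟨s, c, hsc, hf, hbij⟩ := S.hGI 0 S.hkI
  simp only [Nat.mul_zero, Nat.zero_add] at hsc hf hbij
  have h01 : S.a 0 < S.a 1 := S.ha_lt 0 (by have := S.hkI; omega)
  refine ⟨s, c, h01, ?_, hf, ?_, S.ha0, ?_, ?_⟩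
  · intro hs0; rw [hs0] at hsc; simp at hsc
  · exact fun v hv => hbij.2.2 (Set.Ioo_subset_Icc_self hv)
  · exact le_trans (S.aux_a_mono (show 1 ≤ 2*S.kI - 1 by have := S.hkI; omega)
      (by have := S.hkI; omega)) S.ha1
  · intro z hz
    exact (S.mem_IU_iff).mpr ⟨0, S.hkI, le_of_lt hz.1, le_of_lt hz.2⟩

lemma exists_open_avoid (K : ℕ) : ∃ U : Set ℝ, IsOpen U ∧ U.Nonempty ∧ U ⊆ Set.Ioo 0 1 ∧
    ∀ z ∈ U, ∀ i < K, S.G^[i] z ∉ S.IU := by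
  induction K with
  | zero =>
    exact ⟨Set.Ioo 0 1, isOpen_Ioo, ⟨1/2, by norm_num⟩, le_refl _, fun z _ i hi => by omega⟩
  | succ K ih =>
    obtain ⟨U, hUo, hUne, hUsub, hUprop⟩ := ih
    obtain ⟨p, q, s, c, D, hp0, hq1, hpq, hs, hD1, hD2, hf, hsurj, hdisj⟩ := S.branchJ
    obtain ⟨V, hVo, hVne, hVsub, hVU⟩ := cantor_pullback hs hD1 hD2 hf hsurj hUo hUne hUsub
    refine ⟨V, hVo, hVne, hVsub.trans (Set.Ioo_subset_Ioo hp0 hq1), ?_⟩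
    intro z hz i hi
    cases i with
    | zero => simpa using hdisj z (hVsub hz)
    | succ i =>
      rw [Function.iterate_succ_apply]
      exact hUprop _ (hVU z hz) i (by omega)

lemma exists_open_deep (m K : ℕ) : ∃ U : Set ℝ, IsOpen U ∧ U.Nonempty ∧ U ⊆ Set.Ioo 0 1 ∧
    ∀ z ∈ U, (∀ i < m, S.G^[i] z ∈ S.IU) ∧ ∀ i, m ≤ i → i < m + K → S.G^[i] z ∉ S.IU := by
  induction m with
  | zero =>
    obtain ⟨U, hUo, hUne, hUsub, hUprop⟩ := S.exists_open_avoid K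
    exact ⟨U, hUo, hUne, hUsub, fun z hz => ⟨fun i hi => by omega,
      fun i _ hi => hUprop z hz i (by omega)⟩⟩
  | succ m ih =>
    obtain ⟨U, hUo, hUne, hUsub, hUprop⟩ := ih
    obtain ⟨s, c, hpq, hs, hf, hsurj, hp0, hq1, hmem⟩ := S.branchI
    obtain ⟨V, hVo, hVne, hVsub, hVU⟩ :=
      cantor_pullback hs Set.Ioo_subset_Icc_self (le_refl _) hf hsurj hUo hUne hUsub
    refine ⟨V, hVo, hVne, hVsub.trans (Set.Ioo_subset_Ioo hp0 hq1), ?_⟩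
    intro z hz
    obtain ⟨hU1, hU2⟩ := hUprop _ (hVU z hz)
    constructor
    · intro i hi
      cases i with
      | zero => simpa using hmem z (hVsub hz)
      | succ i =>
        rw [Function.iterate_succ_apply]
        exact hU1 i (by omega)
    · intro i h1 h2
      cases i with
      | zero => omega
      | succ i =>
        rw [Function.iterate_succ_apply]
        exact hU2 i (by omega) (by omega)

/-! ### `ψ` estimates -/

lemma psi_term_summable_geom : Summable (fun i : ℕ => (2:ℝ)⁻¹ ^ (i+1)) := by
  have := (summable_geometric_of_lt_one (by norm_num : (0:ℝ) ≤ 2⁻¹)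
    (by norm_num : (2:ℝ)⁻¹ < 1)).mul_right (2:ℝ)⁻¹
  simpa [pow_succ] using this

lemma psi_summable (z : ℝ) :
    Summable (fun i : ℕ => if S.G^[i] z ∈ S.IU then (0:ℝ) else (2:ℝ)⁻¹ ^ (i+1)) := by
  refine Summable.of_nonneg_of_le (fun i => ?_) (fun i => ?_) psi_term_summable_geom
  · split <;> positivity
  · split
    · positivity
    · exact le_refl _

lemma gm_summable (m : ℕ) :
    Summable (fun i : ℕ => if i < m then (0:ℝ) else (2:ℝ)⁻¹ ^ (i+1)) := by
  refine Summable.of_nonneg_of_le (fun i => ?_) (fun i => ?_) psi_term_summable_geom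
  · split <;> positivity
  · split
    · positivity
    · exact le_refl _

lemma sum_pow_half (M : ℕ) : ∑ i ∈ Finset.range M, (2:ℝ)⁻¹ ^ (i+1) = 1 - (2:ℝ)⁻¹ ^ M := by
  induction M with
  | zero => simp
  | succ M ih =>
    rw [Finset.sum_range_succ, ih, pow_succ]
    ring

lemma sum_gm (m M : ℕ) (h : m ≤ M) :
    ∑ i ∈ Finset.range M, (if i < m then (0:ℝ) else (2:ℝ)⁻¹ ^ (i+1))
      = (2:ℝ)⁻¹ ^ m - (2:ℝ)⁻¹ ^ M := by
  have key : ∀ i ∈ Finset.range M, (if i < m then (0:ℝ) else (2:ℝ)⁻¹ ^ (i+1))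
      = (2:ℝ)⁻¹ ^ (i+1) - (if i < m then (2:ℝ)⁻¹ ^ (i+1) else 0) := by
    intro i _; split <;> ring
  rw [Finset.sum_congr rfl key, Finset.sum_sub_distrib, sum_pow_half]
  have h2 : ∑ i ∈ Finset.range M, (if i < m then (2:ℝ)⁻¹ ^ (i+1) else (0:ℝ))
      = ∑ i ∈ Finset.range m, (2:ℝ)⁻¹ ^ (i+1) := by
    rw [← Finset.sum_subset (Finset.range_subset_range.mpr h)
      (fun i _ hi => by rw [if_neg (by simpa using hi)])]
    exact Finset.sum_congr rfl (fun i hi => by rw [if_pos (Finset.mem_range.mp hi)])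
  rw [h2, sum_pow_half]
  ring

lemma tsum_gm (m : ℕ) :
    ∑' i : ℕ, (if i < m then (0:ℝ) else (2:ℝ)⁻¹ ^ (i+1)) = (2:ℝ)⁻¹ ^ m := by
  have hs := gm_summable m
  have h1 := hs.hasSum.tendsto_sum_nat
  have h2 : Tendsto (fun M : ℕ => (2:ℝ)⁻¹ ^ m - (2:ℝ)⁻¹ ^ M) atTop
      (𝓝 ((2:ℝ)⁻¹ ^ m - 0)) :=
    tendsto_const_nhds.sub (tendsto_pow_atTop_nhds_zero_of_lt_one (by norm_num) (by norm_num))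
  have heq : (fun M : ℕ => ∑ i ∈ Finset.range M,
      (if i < m then (0:ℝ) else (2:ℝ)⁻¹ ^ (i+1))) =ᶠ[atTop]
      (fun M : ℕ => (2:ℝ)⁻¹ ^ m - (2:ℝ)⁻¹ ^ M) := by
    filter_upwards [eventually_ge_atTop m] with M hM
    exact sum_gm m M hM
  have := tendsto_nhds_unique (h1.congr' heq) h2
  rw [this]; ring

lemma psi_le_of_mem (z : ℝ) (m : ℕ) (h : ∀ i < m, S.G^[i] z ∈ S.IU) :
    S.psi z ≤ (2:ℝ)⁻¹ ^ m := by
  rw [psi, ← tsum_gm m]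
  refine Summable.tsum_le_tsum (fun i => ?_) (S.psi_summable z) (gm_summable m)
  by_cases hi : i < m
  · rw [if_pos (h i hi), if_pos hi]
  · rw [if_neg hi]
    split
    · positivity
    · exact le_refl _

lemma psi_lt_of_mem (z : ℝ) (m i0 : ℕ) (hm : ∀ i < m, S.G^[i] z ∈ S.IU)
    (hi0 : m ≤ i0) (h0 : S.G^[i0] z ∈ S.IU) : S.psi z < (2:ℝ)⁻¹ ^ m := by
  rw [psi, ← tsum_gm m]
  refine Summable.tsum_lt_tsum (f := fun i : ℕ => if S.G^[i] z ∈ S.IU then (0:ℝ) else (2:ℝ)⁻¹ ^ (i+1))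
    (i := i0) (fun i => ?_) ?_ (S.psi_summable z) (gm_summable m)
  · dsimp only
    by_cases hi : i < m
    · rw [if_pos (hm i hi), if_pos hi]
    · rw [if_neg hi]
      split
      · positivity
      · exact le_refl _
  · rw [if_pos h0, if_neg (show ¬ i0 < m by omega)]
    positivity

lemma psi_ge_single (z : ℝ) (n : ℕ) (h : S.G^[n] z ∉ S.IU) :
    (2:ℝ)⁻¹ ^ (n+1) ≤ S.psi z := by
  have := Summable.le_tsum (S.psi_summable z) n (fun j _ => by split <;> positivity)
  rw [if_neg h] at this
  exact this

lemma psi_ge_partial (z : ℝ) (m K : ℕ) (h1 : ∀ i < m, S.G^[i] z ∈ S.IU)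
    (h2 : ∀ i, m ≤ i → i < m + K → S.G^[i] z ∉ S.IU) :
    (2:ℝ)⁻¹ ^ m - (2:ℝ)⁻¹ ^ (m + K) ≤ S.psi z := by
  have hle := Summable.sum_le_tsum (Finset.range (m + K))
    (fun i _ => by split <;> positivity) (S.psi_summable z)
  rw [psi]
  refine le_trans (le_of_eq ?_) hle
  rw [← sum_gm m (m + K) (Nat.le_add_right _ _)]
  refine Finset.sum_congr rfl (fun i hi => ?_)
  by_cases hi' : i < m
  · rw [if_pos hi', if_pos (h1 i hi')]
  · rw [if_neg hi', if_neg (h2 i (by omega) (Finset.mem_range.mp hi))]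

end CantorData

end AuxLemmas


/-- if `x ∈ Λ_n ∖ Λ_{n+1}` and `y ∈ Λ_{n+1} ∖ P_{n+1}`, then
`φ_α(x) < φ_α(y)`. -/
theorem phi_lt_of_deeper (S : CantorData) (α : ℝ)
    (hα : α ∈ Set.Ioo (0:ℝ) 2) (n : ℕ)
    (x : ℝ) (hx : x ∈ S.Lam n \ S.Lam (n + 1))
    (y : ℝ) (hy : y ∈ S.Lam (n + 1) \ S.Pset (n + 1)) :
    S.phi α x < S.phi α y := by
  obtain ⟨hxLam, hxnot⟩ := hx
  obtain ⟨hyLam, hynot⟩ := hy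
  have hxIcc : x ∈ Set.Icc (0:ℝ) 1 := hxLam.1
  have hxI : ∀ i < n, S.G^[i] x ∈ S.IU := hxLam.2
  have hyI : ∀ i < n + 1, S.G^[i] y ∈ S.IU := hyLam.2
  have hGnx : S.G^[n] x ∉ S.IU := by
    intro h
    refine hxnot ⟨hxIcc, fun i hi => ?_⟩
    rcases Nat.lt_succ_iff_lt_or_eq.mp hi with h' | h'
    · exact hxI i h'
    · rw [h']; exact h
  have hi0 : ∃ i0, n + 1 ≤ i0 ∧ S.G^[i0] y ∈ S.IU := by
    by_contra h
    push_neg at h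
    exact hynot ⟨hyLam.1, hyI, fun i hi hm => h i hi hm⟩
  obtain ⟨i0, hi0le, hi0mem⟩ := hi0
  -- ψ estimates
  have hψx : (2:ℝ)⁻¹ ^ (n+1) ≤ S.psi x := S.psi_ge_single x n hGnx
  have hψy : S.psi y < (2:ℝ)⁻¹ ^ (n+1) := S.psi_lt_of_mem y (n+1) i0 hyI hi0le hi0mem
  obtain ⟨k, hk⟩ := exists_pow_lt_of_lt_one (by linarith : (0:ℝ) < (2:ℝ)⁻¹ ^ (n+1) - S.psi y)
    (by norm_num : (2:ℝ)⁻¹ < 1)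
  have hkk : (2:ℝ)⁻¹ ^ (n + 1 + k) ≤ (2:ℝ)⁻¹ ^ k :=
    pow_le_pow_of_le_one (by norm_num) (by norm_num) (by omega)
  obtain ⟨W, hWo, hWne, hWsub, hWprop⟩ := S.exists_open_deep (n+1) k
  have hWlb : ∀ z ∈ W, S.psi y < S.psi z := by
    intro z hz
    obtain ⟨h1, h2⟩ := hWprop z hz
    have := S.psi_ge_partial z (n+1) k h1 h2
    linarith
  have hWub : ∀ z ∈ W, S.psi z ≤ S.psi x := by
    intro z hz
    exact le_trans (S.psi_le_of_mem z (n+1) (hWprop z hz).1) hψx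
  -- measure estimates
  set A : Set ℝ := {z | S.psi z ≤ S.psi y} with hA
  have hdisj : Disjoint A W := by
    rw [Set.disjoint_left]
    intro z hzA hzW
    have h1 : S.psi z ≤ S.psi y := hzA
    have h2 := hWlb z hzW
    linarith
  have hsub : A ∪ W ⊆ {z | S.psi z ≤ S.psi x} := by
    intro z hz
    simp only [Set.mem_setOf_eq]
    rcases hz with hz | hz
    · have hz' : S.psi z ≤ S.psi y := hz
      linarith
    · exact hWub z hz
  have hWvol : S.mes W = volume W := by
    rw [CantorData.mes, Measure.restrict_apply hWo.measurableSet,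
      Set.inter_eq_left.mpr (hWsub.trans Set.Ioo_subset_Icc_self)]
  have hWpos : 0 < S.mes W := by
    rw [hWvol]; exact hWo.measure_pos volume hWne
  have hWfin : S.mes W ≠ ⊤ := by
    refine ne_top_of_le_ne_top ?_ (measure_mono (Set.subset_univ W))
    rw [CantorData.mes, Measure.restrict_apply_univ, Real.volume_Icc]
    exact ENNReal.ofReal_ne_top
  have hAfin : S.mes A ≠ ⊤ := by
    refine ne_top_of_le_ne_top ?_ (measure_mono (Set.subset_univ A))
    rw [CantorData.mes, Measure.restrict_apply_univ, Real.volume_Icc]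
    exact ENNReal.ofReal_ne_top
  have hXfin : S.mes {z | S.psi z ≤ S.psi x} ≠ ⊤ := by
    refine ne_top_of_le_ne_top ?_ (measure_mono (Set.subset_univ _))
    rw [CantorData.mes, Measure.restrict_apply_univ, Real.volume_Icc]
    exact ENNReal.ofReal_ne_top
  have hkey : S.F (S.psi y) < S.F (S.psi x) := by
    have e1 : S.mes (A ∪ W) = S.mes A + S.mes W := measure_union hdisj hWo.measurableSet
    have e2 : S.mes A + S.mes W ≤ S.mes {z | S.psi z ≤ S.psi x} := e1 ▸ measure_mono hsub
    have h3 : (S.mes A).toReal + (S.mes W).toReal ≤ S.F (S.psi x) := by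
      rw [CantorData.F, ← ENNReal.toReal_add hAfin hWfin]
      exact ENNReal.toReal_mono hXfin e2
    have h4 : 0 < (S.mes W).toReal := ENNReal.toReal_pos (ne_of_gt hWpos) hWfin
    have h5 : S.F (S.psi y) = (S.mes A).toReal := rfl
    linarith
  -- conclude via rpow monotonicity
  have hlt : ENNReal.ofReal (S.F (S.psi y)) < ENNReal.ofReal (S.F (S.psi x)) :=
    (ENNReal.ofReal_lt_ofReal_iff
      (lt_of_le_of_lt ENNReal.toReal_nonneg hkey)).mpr hkey
  rw [CantorData.phi, CantorData.phi, ENNReal.rpow_neg, ENNReal.rpow_neg,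
    ENNReal.inv_lt_inv]
  exact ENNReal.rpow_lt_rpow hlt (by have := hα.1; positivity)
end

section
/- The process (X_n) has α-regularly varying tails with normalising sequence 𝔞_n = n^{1/α}: for every y > 0, lim_{n→∞} n·𝔪{x ∈ [0,1] : X_0(x) > y·n^{1/α}} = y^{−α}. (Paper's Lemma 4.3.) -/
open Set MeasureTheory Filter
open scoped ENNReal Topology Classical

namespace CantorData

variable (S : CantorData)

/-! ### Auxiliary development for the proof of the tail lemma. -/

lemma a_lt_a {i j : ℕ} (h : i < j) (hj : j < 2 * S.kI) : S.a i < S.a j := by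
  induction j with
  | zero => omega
  | succ j ih =>
    rcases Nat.lt_succ_iff_lt_or_eq.mp h with h' | h'
    · exact (ih h' (by omega)).trans (S.ha_lt j hj)
    · subst h'; exact S.ha_lt i hj

lemma a_le_a {i j : ℕ} (h : i ≤ j) (hj : j ≤ 2 * S.kI - 1) : S.a i ≤ S.a j := by
  have hk := S.hkI
  rcases eq_or_lt_of_le h with rfl | h'
  · exact le_rfl
  · exact (S.a_lt_a h' (by omega)).le

lemma a_nonneg {i : ℕ} (hi : i ≤ 2 * S.kI - 1) : 0 ≤ S.a i :=
  S.ha0.trans (S.a_le_a (Nat.zero_le _) hi)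

lemma a_le_one {i : ℕ} (hi : i ≤ 2 * S.kI - 1) : S.a i ≤ 1 :=
  (S.a_le_a hi le_rfl).trans S.ha1

lemma Ipiece_subset {i : ℕ} (hi : i < S.kI) :
    Set.Icc (S.a (2 * i)) (S.a (2 * i + 1)) ⊆ Set.Icc (0:ℝ) 1 :=
  Set.Icc_subset_Icc (S.a_nonneg (by omega)) (S.a_le_one (by omega))

lemma mem_IU {x : ℝ} :
    x ∈ S.IU ↔ ∃ i < S.kI, x ∈ Set.Icc (S.a (2 * i)) (S.a (2 * i + 1)) := by
  constructor
  · intro hx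
    obtain ⟨i, hi, hxi⟩ := Set.mem_iUnion₂.mp hx
    exact ⟨i, Finset.mem_range.mp hi, hxi⟩
  · rintro ⟨i, hi, hxi⟩
    exact Set.mem_iUnion₂.mpr ⟨i, Finset.mem_range.mpr hi, hxi⟩

lemma IU_subset : S.IU ⊆ Set.Icc (0:ℝ) 1 := by
  intro x hx
  obtain ⟨i, hi, hxi⟩ := S.mem_IU.mp hx
  exact S.Ipiece_subset hi hxi

lemma IU_measurable : MeasurableSet S.IU := by
  refine Finset.measurableSet_biUnion _ fun i _ => measurableSet_Icc

/-- Every point of `[0,1]` not in `⋃ I_i` lies in one of the gap intervals. -/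
lemma cover {x : ℝ} (hx : x ∈ Set.Icc (0:ℝ) 1) (hxn : x ∉ S.IU) :
    x ∈ Set.Ico 0 (S.a 0) ∨
      (∃ i, i + 1 < S.kI ∧ x ∈ Set.Ioo (S.a (2 * i + 1)) (S.a (2 * i + 2))) ∨
      x ∈ Set.Ioc (S.a (2 * S.kI - 1)) 1 := by
  have hk := S.hkI
  by_cases h0 : x < S.a 0
  · exact Or.inl ⟨hx.1, h0⟩
  push_neg at h0
  by_cases h1 : S.a (2 * S.kI - 1) < x
  · exact Or.inr (Or.inr ⟨h1, hx.2⟩)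
  push_neg at h1
  classical
  set j0 := Nat.findGreatest (fun j => S.a j ≤ x) (2 * S.kI - 1) with hj0
  have hsp : S.a j0 ≤ x :=
    Nat.findGreatest_spec (P := fun j => S.a j ≤ x) (Nat.zero_le _) h0
  have hgt : ∀ k, j0 < k → k ≤ 2 * S.kI - 1 → ¬ S.a k ≤ x := fun k hk1 hk2 =>
    Nat.findGreatest_is_greatest (P := fun j => S.a j ≤ x) hk1 hk2
  have hj0le : j0 ≤ 2 * S.kI - 1 := Nat.findGreatest_le _
  rcases Nat.even_or_odd j0 with ⟨i, hi⟩ | ⟨i, hi⟩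
  · -- j0 = 2 i : then x ∈ I_i, contradiction
    exfalso
    have hne : j0 + 1 ≤ 2 * S.kI - 1 := by omega
    have hx2 : x < S.a (j0 + 1) := not_le.mp (hgt _ (Nat.lt_succ_self _) hne)
    refine hxn (S.mem_IU.mpr ⟨i, by omega, ?_, ?_⟩)
    · have : 2 * i = j0 := by omega
      rw [this]; exact hsp
    · have : 2 * i + 1 = j0 + 1 := by omega
      rw [this]; exact hx2.le
  · -- j0 = 2 i + 1
    by_cases hend : j0 = 2 * S.kI - 1
    · exfalso
      refine hxn (S.mem_IU.mpr ⟨i, by omega, ?_, ?_⟩)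
      · have h2 : (2 * i : ℕ) ≤ j0 := by omega
        exact (S.a_le_a h2 hj0le).trans hsp
      · have : 2 * i + 1 = j0 := by omega
        rw [this]; exact le_trans h1 (le_of_eq (by rw [hend]))
    · have hne : j0 + 1 ≤ 2 * S.kI - 1 := by omega
      have hx2 : x < S.a (j0 + 1) := not_le.mp (hgt _ (Nat.lt_succ_self _) hne)
      rcases eq_or_lt_of_le hsp with heq | hlt
      · exfalso
        refine hxn (S.mem_IU.mpr ⟨i, by omega, ?_, ?_⟩)
        · have h2 : (2 * i : ℕ) ≤ j0 := by omega
          exact (S.a_le_a h2 hj0le).trans hsp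
        · have : 2 * i + 1 = j0 := by omega
          rw [this, ← heq]
      · refine Or.inr (Or.inl ⟨i, by omega, ?_, ?_⟩)
        · have : 2 * i + 1 = j0 := by omega
          rw [this]; exact hlt
        · have : 2 * i + 2 = j0 + 1 := by omega
          rw [this]; exact hx2

lemma sum_parity (g : ℕ → ℝ) (K : ℕ) :
    (∑ i ∈ Finset.range (K + 1), g (2 * i)) + (∑ i ∈ Finset.range K, g (2 * i + 1)) =
      ∑ j ∈ Finset.range (2 * K + 1), g j := by
  induction K with
  | zero => simp
  | succ K ih =>
    have h1 : 2 * (K + 1) + 1 = (2 * K + 1) + 1 + 1 := by omega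
    rw [h1, Finset.sum_range_succ (f := fun i => g (2 * i)) (n := K + 1),
      Finset.sum_range_succ (f := fun i => g (2 * i + 1)) (n := K),
      Finset.sum_range_succ (f := g) (n := 2 * K + 1 + 1),
      Finset.sum_range_succ (f := g) (n := 2 * K + 1), ← ih]
    have h2 : 2 * (K + 1) = 2 * K + 1 + 1 := by omega
    rw [h2]; ring

lemma sum_J_eq :
    S.a 0 + (∑ i ∈ Finset.range (S.kI - 1), (S.a (2 * i + 2) - S.a (2 * i + 1))) +
      (1 - S.a (2 * S.kI - 1)) = 1 - S.lam := by
  obtain ⟨K, hK⟩ : ∃ K, S.kI = K + 1 := ⟨S.kI - 1, by have := S.hkI; omega⟩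
  have tele : ∑ j ∈ Finset.range (2 * K + 1), (S.a (j + 1) - S.a j) =
      S.a (2 * K + 1) - S.a 0 := Finset.sum_range_sub (f := S.a) (2 * K + 1)
  have split := sum_parity (fun j => S.a (j + 1) - S.a j) K
  have hlam : S.lam = ∑ i ∈ Finset.range (K + 1), (S.a (2 * i + 1) - S.a (2 * i)) := by
    rw [lam, hK]
  have hmid : (∑ i ∈ Finset.range (S.kI - 1), (S.a (2 * i + 2) - S.a (2 * i + 1))) =
      ∑ i ∈ Finset.range K, (S.a (2 * i + 1 + 1) - S.a (2 * i + 1)) := by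
    rw [hK]; simp only [Nat.add_sub_cancel]
  have hend : 2 * S.kI - 1 = 2 * K + 1 := by omega
  rw [hmid, hend, hlam]
  have := split
  nlinarith [this, tele]

lemma lam_pos : 0 < S.lam := by
  refine Finset.sum_pos (fun i hi => ?_) ?_
  · rw [Finset.mem_range] at hi
    have h5 : S.a (2 * i) < S.a (2 * i + 1) :=
      S.a_lt_a (Nat.lt_succ_self (2 * i)) (by omega)
    linarith
  · exact Finset.nonempty_range_iff.mpr (by have := S.hkI; omega)

lemma mid_sum_nonneg :
    0 ≤ ∑ i ∈ Finset.range (S.kI - 1), (S.a (2 * i + 2) - S.a (2 * i + 1)) := by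
  refine Finset.sum_nonneg fun i hi => ?_
  rw [Finset.mem_range] at hi
  have h5 : S.a (2 * i + 1) < S.a (2 * i + 1 + 1) :=
    S.a_lt_a (Nat.lt_succ_self (2 * i + 1)) (by omega)
  have h6 : (2 * i + 1 + 1) = 2 * i + 2 := by omega
  rw [h6] at h5
  linarith

lemma lam_lt_one : S.lam < 1 := by
  have hsum := S.sum_J_eq
  have hmid := S.mid_sum_nonneg
  have hright : S.a (2 * S.kI - 1) ≤ 1 := S.ha1
  obtain ⟨x, hx⟩ := S.hkJ
  have hx1 : x ∈ Set.Icc (0:ℝ) 1 := hx.1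
  have hx2 : x ∉ S.IU := hx.2
  rcases S.cover hx1 hx2 with h | ⟨i, hi, h⟩ | h
  · have : 0 < S.a 0 := lt_of_le_of_lt h.1 h.2
    linarith
  · have hterm : 0 < S.a (2 * i + 2) - S.a (2 * i + 1) := by
      have h5 : S.a (2 * i + 1) < S.a (2 * i + 1 + 1) :=
        S.a_lt_a (Nat.lt_succ_self (2 * i + 1)) (by omega)
      have h6 : (2 * i + 1 + 1) = 2 * i + 2 := by omega
      rw [h6] at h5
      linarith
    have hsingle : S.a (2 * i + 2) - S.a (2 * i + 1) ≤
        ∑ j ∈ Finset.range (S.kI - 1), (S.a (2 * j + 2) - S.a (2 * j + 1)) := by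
      refine Finset.single_le_sum (f := fun j => S.a (2 * j + 2) - S.a (2 * j + 1))
        (fun j hj => ?_) (Finset.mem_range.mpr (by omega))
      rw [Finset.mem_range] at hj
      have h5 : S.a (2 * j + 1) < S.a (2 * j + 1 + 1) :=
        S.a_lt_a (Nat.lt_succ_self (2 * j + 1)) (by omega)
      have h6 : (2 * j + 1 + 1) = 2 * j + 2 := by omega
      rw [h6] at h5
      show 0 ≤ S.a (2 * j + 2) - S.a (2 * j + 1)
      linarith
    have := S.ha0
    linarith
  · have : S.a (2 * S.kI - 1) < 1 := lt_of_lt_of_le h.1 h.2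
    have := S.ha0
    linarith

lemma lam_nonneg : 0 ≤ S.lam := S.lam_pos.le

lemma affine_preimage_vol (s c : ℝ) (hs : s ≠ 0) (A : Set ℝ) :
    volume ((fun x => s * x + c) ⁻¹' A) = ENNReal.ofReal |s⁻¹| * volume A := by
  have h : (fun x : ℝ => s * x + c) ⁻¹' A = (fun x : ℝ => s * x) ⁻¹' ((fun y => y + c) ⁻¹' A) :=
    rfl
  rw [h]
  rw [show (fun x : ℝ => s * x) = (s * ·) from rfl, Real.volume_preimage_mul_left hs,
    measure_preimage_add_right]

lemma piece_inter_preimage (P : Set ℝ) (s c : ℝ) (hG : ∀ x ∈ P, S.G x = s * x + c)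
    (A : Set ℝ) : P ∩ S.G ⁻¹' A = P ∩ (fun x => s * x + c) ⁻¹' A := by
  ext x
  simp only [Set.mem_inter_iff, Set.mem_preimage]
  constructor
  · rintro ⟨h1, h2⟩; exact ⟨h1, by rw [← hG x h1]; exact h2⟩
  · rintro ⟨h1, h2⟩; exact ⟨h1, by rw [hG x h1]; exact h2⟩

lemma piece_vol_le (P : Set ℝ) (s c L : ℝ) (hsl : |s| * L = 1)
    (hG : ∀ x ∈ P, S.G x = s * x + c) (A : Set ℝ) :
    volume (P ∩ S.G ⁻¹' A) ≤ ENNReal.ofReal L * volume A := by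
  have hs : s ≠ 0 := by
    intro h; rw [h] at hsl; simp at hsl
  have hL : L = |s⁻¹| := by
    rw [abs_inv]
    have h1 : |s| ≠ 0 := abs_ne_zero.mpr hs
    field_simp
    linarith [hsl]
  rw [S.piece_inter_preimage P s c hG A]
  calc volume (P ∩ (fun x => s * x + c) ⁻¹' A) ≤ volume ((fun x => s * x + c) ⁻¹' A) :=
        measure_mono Set.inter_subset_right
    _ = ENNReal.ofReal |s⁻¹| * volume A := affine_preimage_vol s c hs A
    _ = ENNReal.ofReal L * volume A := by rw [hL]

lemma piece_meas (P : Set ℝ) (hP : MeasurableSet P) (s c : ℝ)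
    (hG : ∀ x ∈ P, S.G x = s * x + c) (A : Set ℝ) (hA : MeasurableSet A) :
    MeasurableSet (P ∩ S.G ⁻¹' A) := by
  rw [S.piece_inter_preimage P s c hG A]
  exact hP.inter (((measurable_id.const_mul s).add_const c) hA)

/-- Key recursion bound over the `I` branches. -/
lemma rec_I (A : Set ℝ) :
    volume {x ∈ Set.Icc (0:ℝ) 1 | x ∈ S.IU ∧ S.G x ∈ A} ≤
      ENNReal.ofReal S.lam * volume A := by
  have hsub : {x ∈ Set.Icc (0:ℝ) 1 | x ∈ S.IU ∧ S.G x ∈ A} ⊆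
      ⋃ i ∈ Finset.range S.kI,
        (Set.Icc (S.a (2 * i)) (S.a (2 * i + 1)) ∩ S.G ⁻¹' A) := by
    rintro x ⟨hx, hIU, hGx⟩
    obtain ⟨i, hi, hxi⟩ := S.mem_IU.mp hIU
    exact Set.mem_iUnion₂.mpr ⟨i, Finset.mem_range.mpr hi, hxi, hGx⟩
  refine (measure_mono hsub).trans ?_
  refine (measure_biUnion_finset_le _ _).trans ?_
  have hbound : ∀ i ∈ Finset.range S.kI,
      volume (Set.Icc (S.a (2 * i)) (S.a (2 * i + 1)) ∩ S.G ⁻¹' A) ≤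
        ENNReal.ofReal (S.a (2 * i + 1) - S.a (2 * i)) * volume A := by
    intro i hi
    obtain ⟨s, c, h1, h2, _⟩ := S.hGI i (Finset.mem_range.mp hi)
    exact S.piece_vol_le _ s c _ h1 h2 A
  refine (Finset.sum_le_sum hbound).trans ?_
  have hnn : ∀ i ∈ Finset.range S.kI, 0 ≤ S.a (2 * i + 1) - S.a (2 * i) := by
    intro i hi
    rw [Finset.mem_range] at hi
    have h5 : S.a (2 * i) < S.a (2 * i + 1) :=
      S.a_lt_a (Nat.lt_succ_self (2 * i)) (by omega)
    linarith
  rw [← Finset.sum_mul, ← ENNReal.ofReal_sum_of_nonneg hnn]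
  exact le_of_eq (by rw [lam])

/-- Key recursion bound over the `J` gaps. -/
lemma rec_J (A : Set ℝ) :
    volume {x ∈ Set.Icc (0:ℝ) 1 | x ∉ S.IU ∧ S.G x ∈ A} ≤
      ENNReal.ofReal (1 - S.lam) * volume A := by
  have hsub : {x ∈ Set.Icc (0:ℝ) 1 | x ∉ S.IU ∧ S.G x ∈ A} ⊆
      (Set.Ico 0 (S.a 0) ∩ S.G ⁻¹' A) ∪
        ((⋃ i ∈ Finset.range (S.kI - 1),
          (Set.Ioo (S.a (2 * i + 1)) (S.a (2 * i + 2)) ∩ S.G ⁻¹' A)) ∪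
        (Set.Ioc (S.a (2 * S.kI - 1)) 1 ∩ S.G ⁻¹' A)) := by
    rintro x ⟨hx, hIU, hGx⟩
    rcases S.cover hx hIU with h | ⟨i, hi, h⟩ | h
    · exact Or.inl ⟨h, hGx⟩
    · exact Or.inr (Or.inl (Set.mem_iUnion₂.mpr ⟨i, Finset.mem_range.mpr (by omega), h, hGx⟩))
    · exact Or.inr (Or.inr ⟨h, hGx⟩)
  refine (measure_mono hsub).trans ?_
  refine (measure_union_le _ _).trans ?_
  refine (add_le_add le_rfl (measure_union_le _ _)).trans ?_
  have hL : volume (Set.Ico 0 (S.a 0) ∩ S.G ⁻¹' A) ≤ ENNReal.ofReal (S.a 0) * volume A := by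
    by_cases h0 : 0 < S.a 0
    · obtain ⟨s, c, h1, h2, _⟩ := S.hGJleft h0
      exact S.piece_vol_le _ s c _ h1 h2 A
    · push_neg at h0
      have : Set.Ico (0:ℝ) (S.a 0) = ∅ := Set.Ico_eq_empty (by intro h; exact absurd h (not_lt.mpr h0))
      rw [this, Set.empty_inter, measure_empty]
      exact zero_le
  have hR : volume (Set.Ioc (S.a (2 * S.kI - 1)) 1 ∩ S.G ⁻¹' A) ≤
      ENNReal.ofReal (1 - S.a (2 * S.kI - 1)) * volume A := by
    by_cases h0 : S.a (2 * S.kI - 1) < 1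
    · obtain ⟨s, c, h1, h2, _⟩ := S.hGJright h0
      exact S.piece_vol_le _ s c _ h1 h2 A
    · push_neg at h0
      have : Set.Ioc (S.a (2 * S.kI - 1)) (1:ℝ) = ∅ :=
        Set.Ioc_eq_empty (by intro h; exact absurd h0 (not_le.mpr h))
      rw [this, Set.empty_inter, measure_empty]
      exact zero_le
  have hM : volume (⋃ i ∈ Finset.range (S.kI - 1),
      (Set.Ioo (S.a (2 * i + 1)) (S.a (2 * i + 2)) ∩ S.G ⁻¹' A)) ≤
      ENNReal.ofReal (∑ i ∈ Finset.range (S.kI - 1), (S.a (2 * i + 2) - S.a (2 * i + 1))) *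
        volume A := by
    refine (measure_biUnion_finset_le _ _).trans ?_
    have hbound : ∀ i ∈ Finset.range (S.kI - 1),
        volume (Set.Ioo (S.a (2 * i + 1)) (S.a (2 * i + 2)) ∩ S.G ⁻¹' A) ≤
          ENNReal.ofReal (S.a (2 * i + 2) - S.a (2 * i + 1)) * volume A := by
      intro i hi
      rw [Finset.mem_range] at hi
      obtain ⟨s, c, h1, h2, _⟩ := S.hGJmid i (by omega)
      exact S.piece_vol_le _ s c _ h1 h2 A
    refine (Finset.sum_le_sum hbound).trans ?_
    have hnn : ∀ i ∈ Finset.range (S.kI - 1),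
        0 ≤ S.a (2 * i + 2) - S.a (2 * i + 1) := by
      intro i hi
      rw [Finset.mem_range] at hi
      have h5 : S.a (2 * i + 1) < S.a (2 * i + 1 + 1) :=
        S.a_lt_a (Nat.lt_succ_self (2 * i + 1)) (by omega)
      have h6 : (2 * i + 1 + 1) = 2 * i + 2 := by omega
      rw [h6] at h5
      linarith
    rw [← Finset.sum_mul, ← ENNReal.ofReal_sum_of_nonneg hnn]
  calc volume (Set.Ico 0 (S.a 0) ∩ S.G ⁻¹' A) +
        (volume (⋃ i ∈ Finset.range (S.kI - 1),
          (Set.Ioo (S.a (2 * i + 1)) (S.a (2 * i + 2)) ∩ S.G ⁻¹' A)) +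
        volume (Set.Ioc (S.a (2 * S.kI - 1)) 1 ∩ S.G ⁻¹' A)) ≤
      ENNReal.ofReal (S.a 0) * volume A +
        (ENNReal.ofReal (∑ i ∈ Finset.range (S.kI - 1),
            (S.a (2 * i + 2) - S.a (2 * i + 1))) * volume A +
          ENNReal.ofReal (1 - S.a (2 * S.kI - 1)) * volume A) :=
      add_le_add hL (add_le_add hM hR)
    _ = ENNReal.ofReal (1 - S.lam) * volume A := by
      rw [← S.sum_J_eq,
        ENNReal.ofReal_add (add_nonneg S.ha0 S.mid_sum_nonneg) (by have := S.ha1; linarith),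
        ENNReal.ofReal_add S.ha0 S.mid_sum_nonneg, add_mul, add_mul]
      ring

/-- `M_i = {x ∈ [0,1] : G^[i] x ∈ ⋃ I}`. -/
def Mset (i : ℕ) : Set ℝ := {x ∈ Set.Icc (0:ℝ) 1 | S.G^[i] x ∈ S.IU}

lemma mem_Mset_succ {x : ℝ} {i : ℕ} (hx : x ∈ Set.Icc (0:ℝ) 1) :
    x ∈ S.Mset (i + 1) ↔ S.G x ∈ S.Mset i := by
  simp only [Mset, Set.mem_setOf_eq, Function.iterate_succ_apply]
  constructor
  · rintro ⟨_, h⟩; exact ⟨S.hGmaps hx, h⟩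
  · rintro ⟨_, h⟩; exact ⟨hx, h⟩

lemma Mset_meas : ∀ i, MeasurableSet (S.Mset i) := by
  intro i
  induction i with
  | zero =>
    have : S.Mset 0 = Set.Icc (0:ℝ) 1 ∩ S.IU := by
      ext x
      simp [Mset]
    rw [this]
    exact measurableSet_Icc.inter S.IU_measurable
  | succ i ih =>
    have key : S.Mset (i + 1) =
        (⋃ k ∈ Finset.range S.kI,
          (Set.Icc (S.a (2 * k)) (S.a (2 * k + 1)) ∩ S.G ⁻¹' (S.Mset i))) ∪
        ((Set.Ico 0 (S.a 0) ∩ S.G ⁻¹' (S.Mset i)) ∪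
        ((⋃ k ∈ Finset.range (S.kI - 1),
          (Set.Ioo (S.a (2 * k + 1)) (S.a (2 * k + 2)) ∩ S.G ⁻¹' (S.Mset i))) ∪
        (Set.Ioc (S.a (2 * S.kI - 1)) 1 ∩ S.G ⁻¹' (S.Mset i)))) := by
      have hk := S.hkI
      ext x
      constructor
      · intro hx
        have hx1 : x ∈ Set.Icc (0:ℝ) 1 := hx.1
        have hGx : S.G x ∈ S.Mset i := (S.mem_Mset_succ hx1).mp hx
        by_cases hIU : x ∈ S.IU
        · obtain ⟨k, hk', hxk⟩ := S.mem_IU.mp hIU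
          exact Or.inl (Set.mem_iUnion₂.mpr ⟨k, Finset.mem_range.mpr hk', hxk, hGx⟩)
        · rcases S.cover hx1 hIU with h | ⟨k, hk', h⟩ | h
          · exact Or.inr (Or.inl ⟨h, hGx⟩)
          · exact Or.inr (Or.inr (Or.inl
              (Set.mem_iUnion₂.mpr ⟨k, Finset.mem_range.mpr (by omega), h, hGx⟩)))
          · exact Or.inr (Or.inr (Or.inr ⟨h, hGx⟩))
      · intro hx
        have hIcc : x ∈ Set.Icc (0:ℝ) 1 ∧ S.G x ∈ S.Mset i := by
          rcases hx with h | h | h | h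
          · obtain ⟨k, hk', hxk⟩ := Set.mem_iUnion₂.mp h
            exact ⟨S.Ipiece_subset (Finset.mem_range.mp hk') hxk.1, hxk.2⟩
          · refine ⟨⟨h.1.1, ?_⟩, h.2⟩
            exact h.1.2.le.trans (S.a_le_one (by omega))
          · obtain ⟨k, hk', hxk⟩ := Set.mem_iUnion₂.mp h
            rw [Finset.mem_range] at hk'
            refine ⟨⟨(S.a_nonneg (i := 2 * k + 1) (by omega)).trans hxk.1.1.le, ?_⟩, hxk.2⟩
            exact hxk.1.2.le.trans (S.a_le_one (by omega))
          · exact ⟨⟨(S.a_nonneg (by omega)).trans h.1.1.le, h.1.2⟩, h.2⟩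
        exact (S.mem_Mset_succ hIcc.1).mpr hIcc.2
    rw [key]
    have hIparts : MeasurableSet (⋃ k ∈ Finset.range S.kI,
        (Set.Icc (S.a (2 * k)) (S.a (2 * k + 1)) ∩ S.G ⁻¹' (S.Mset i))) := by
      refine Finset.measurableSet_biUnion _ fun k hk => ?_
      obtain ⟨s, c, _, h2, _⟩ := S.hGI k (Finset.mem_range.mp hk)
      exact S.piece_meas _ measurableSet_Icc s c h2 _ ih
    have hLpart : MeasurableSet (Set.Ico 0 (S.a 0) ∩ S.G ⁻¹' (S.Mset i)) := by
      by_cases h0 : 0 < S.a 0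
      · obtain ⟨s, c, _, h2, _⟩ := S.hGJleft h0
        exact S.piece_meas _ measurableSet_Ico s c h2 _ ih
      · push_neg at h0
        have : Set.Ico (0:ℝ) (S.a 0) = ∅ := Set.Ico_eq_empty (not_lt.mpr h0)
        rw [this, Set.empty_inter]
        exact MeasurableSet.empty
    have hMparts : MeasurableSet (⋃ k ∈ Finset.range (S.kI - 1),
        (Set.Ioo (S.a (2 * k + 1)) (S.a (2 * k + 2)) ∩ S.G ⁻¹' (S.Mset i))) := by
      refine Finset.measurableSet_biUnion _ fun k hk => ?_
      rw [Finset.mem_range] at hk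
      obtain ⟨s, c, _, h2, _⟩ := S.hGJmid k (by omega)
      exact S.piece_meas _ measurableSet_Ioo s c h2 _ ih
    have hRpart : MeasurableSet (Set.Ioc (S.a (2 * S.kI - 1)) 1 ∩ S.G ⁻¹' (S.Mset i)) := by
      by_cases h0 : S.a (2 * S.kI - 1) < 1
      · obtain ⟨s, c, _, h2, _⟩ := S.hGJright h0
        exact S.piece_meas _ measurableSet_Ioc s c h2 _ ih
      · push_neg at h0
        have : Set.Ioc (S.a (2 * S.kI - 1)) (1:ℝ) = ∅ := Set.Ioc_eq_empty (not_lt.mpr h0)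
        rw [this, Set.empty_inter]
        exact MeasurableSet.empty
    exact hIparts.union (hLpart.union (hMparts.union hRpart))

/-- A measurable version of `ψ`, agreeing with `ψ` on `[0,1]`. -/
noncomputable def psiM (x : ℝ) : ℝ :=
  ∑' i : ℕ, if x ∈ S.Mset i then 0 else (2:ℝ)⁻¹ ^ (i + 1)

lemma geom_summable : Summable (fun i : ℕ => (2:ℝ)⁻¹ ^ (i + 1)) := by
  have h : Summable (fun i : ℕ => (2:ℝ)⁻¹ ^ i) :=
    summable_geometric_of_lt_one (by norm_num) (by norm_num)
  simpa [pow_succ] using h.mul_right (2:ℝ)⁻¹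

lemma geom_tsum : ∑' i : ℕ, (2:ℝ)⁻¹ ^ (i + 1) = 1 := by
  have h : ∑' i : ℕ, (2:ℝ)⁻¹ ^ i = 2 := by
    rw [tsum_geometric_of_lt_one (by norm_num) (by norm_num)]; norm_num
  calc ∑' i : ℕ, (2:ℝ)⁻¹ ^ (i + 1) = ∑' i : ℕ, (2:ℝ)⁻¹ * (2:ℝ)⁻¹ ^ i := by
        refine tsum_congr fun i => ?_; rw [pow_succ]; ring
    _ = (2:ℝ)⁻¹ * ∑' i : ℕ, (2:ℝ)⁻¹ ^ i := tsum_mul_left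
    _ = 1 := by rw [h]; norm_num

lemma psi_term_nonneg (x : ℝ) (i : ℕ) :
    0 ≤ if x ∈ S.Mset i then 0 else (2:ℝ)⁻¹ ^ (i + 1) := by
  split
  · exact le_rfl
  · positivity

lemma psi_term_le (x : ℝ) (i : ℕ) :
    (if x ∈ S.Mset i then 0 else (2:ℝ)⁻¹ ^ (i + 1)) ≤ (2:ℝ)⁻¹ ^ (i + 1) := by
  split
  · positivity
  · exact le_rfl

lemma psi_term_summable (x : ℝ) :
    Summable (fun i : ℕ => if x ∈ S.Mset i then 0 else (2:ℝ)⁻¹ ^ (i + 1)) :=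
  Summable.of_nonneg_of_le (S.psi_term_nonneg x) (S.psi_term_le x) geom_summable

lemma psiM_nonneg (x : ℝ) : 0 ≤ S.psiM x :=
  tsum_nonneg (S.psi_term_nonneg x)

lemma psiM_le_one (x : ℝ) : S.psiM x ≤ 1 := by
  rw [psiM, ← geom_tsum]
  exact Summable.tsum_le_tsum (S.psi_term_le x) (S.psi_term_summable x) geom_summable

lemma psiM_rec {x : ℝ} (hx : x ∈ Set.Icc (0:ℝ) 1) :
    S.psiM x = (if x ∈ S.IU then 0 else 2⁻¹) + 2⁻¹ * S.psiM (S.G x) := by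
  obtain ⟨hx0, hx1⟩ := hx
  rw [psiM, Summable.tsum_eq_zero_add (S.psi_term_summable x)]
  congr 1
  · have h0 : x ∈ S.Mset 0 ↔ x ∈ S.IU := by
      simp [Mset, Set.mem_Icc, hx0, hx1]
    by_cases h : x ∈ S.IU
    · rw [if_pos (h0.mpr h), if_pos h]
    · rw [if_neg (fun hc => h (h0.mp hc)), if_neg h]
      norm_num
  · rw [psiM, ← tsum_mul_left]
    refine tsum_congr fun i => ?_
    have hiff : x ∈ S.Mset (i + 1) ↔ S.G x ∈ S.Mset i := S.mem_Mset_succ ⟨hx0, hx1⟩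
    by_cases h : S.G x ∈ S.Mset i
    · rw [if_pos (hiff.mpr h), if_pos h]; ring
    · rw [if_neg (fun hc => h (hiff.mp hc)), if_neg h]; ring

lemma psi_eq_psiM {x : ℝ} (hx : x ∈ Set.Icc (0:ℝ) 1) : S.psi x = S.psiM x := by
  rw [psi, psiM]
  refine tsum_congr fun i => ?_
  have : S.G^[i] x ∈ S.IU ↔ x ∈ S.Mset i := by
    obtain ⟨hx0, hx1⟩ := hx
    simp [Mset, Set.mem_Icc, hx0, hx1]
  by_cases h : S.G^[i] x ∈ S.IU
  · rw [if_pos h, if_pos (this.mp h)]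
  · rw [if_neg h, if_neg (fun hc => h (this.mpr hc))]

lemma psiM_measurable : Measurable S.psiM := by
  have hmeas : ∀ n : ℕ, Measurable (fun x =>
      ∑ i ∈ Finset.range n, if x ∈ S.Mset i then 0 else (2:ℝ)⁻¹ ^ (i + 1)) := by
    intro n
    refine Finset.measurable_sum _ fun i _ => ?_
    exact Measurable.ite (S.Mset_meas i) measurable_const measurable_const
  refine measurable_of_tendsto_metrizable hmeas ?_
  rw [tendsto_pi_nhds]
  intro x
  exact (S.psi_term_summable x).hasSum.tendsto_sum_nat

/-- The level sets of `ψ` are Lebesgue null. -/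
lemma psiM_atom (t : ℝ) : volume {x ∈ Set.Icc (0:ℝ) 1 | S.psiM x = t} = 0 := by
  classical
  set m : ℝ → ℝ≥0∞ := fun u => volume {x ∈ Set.Icc (0:ℝ) 1 | S.psiM x = u} with hm
  have hfin : ∀ u, m u ≤ 1 := by
    intro u
    refine le_trans (measure_mono (Set.sep_subset _ _)) ?_
    rw [Real.volume_Icc]
    norm_num
  have hout : ∀ u : ℝ, u < 0 ∨ 1 < u → m u = 0 := by
    intro u hu
    have : {x ∈ Set.Icc (0:ℝ) 1 | S.psiM x = u} = ∅ := by
      refine Set.eq_empty_iff_forall_notMem.mpr fun x hx => ?_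
      have h1 := S.psiM_nonneg x
      have h2 := S.psiM_le_one x
      rcases hu with hu | hu
      · rw [hx.2] at h1; linarith
      · rw [hx.2] at h2; linarith
    show volume {x ∈ Set.Icc (0:ℝ) 1 | S.psiM x = u} = 0
    rw [this, measure_empty]
  have hrec : ∀ u : ℝ, m u ≤
      ENNReal.ofReal S.lam * m (2 * u) + ENNReal.ofReal (1 - S.lam) * m (2 * u - 1) := by
    intro u
    have hsub : {x ∈ Set.Icc (0:ℝ) 1 | S.psiM x = u} ⊆
        {x ∈ Set.Icc (0:ℝ) 1 | x ∈ S.IU ∧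
          S.G x ∈ {y ∈ Set.Icc (0:ℝ) 1 | S.psiM y = 2 * u}} ∪
        {x ∈ Set.Icc (0:ℝ) 1 | x ∉ S.IU ∧
          S.G x ∈ {y ∈ Set.Icc (0:ℝ) 1 | S.psiM y = 2 * u - 1}} := by
      rintro x ⟨hx, ht⟩
      have hrec' := S.psiM_rec hx
      have hGx : S.G x ∈ Set.Icc (0:ℝ) 1 := S.hGmaps hx
      by_cases hIU : x ∈ S.IU
      · rw [if_pos hIU] at hrec'
        exact Or.inl ⟨hx, hIU, hGx, by rw [ht] at hrec'; linarith⟩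
      · rw [if_neg hIU] at hrec'
        exact Or.inr ⟨hx, hIU, hGx, by rw [ht] at hrec'; linarith⟩
    refine le_trans (measure_mono hsub) (le_trans (measure_union_le _ _) ?_)
    exact add_le_add (S.rec_I _) (S.rec_J _)
  have hm0 : m 0 = 0 := by
    have h := hrec 0
    rw [show (2:ℝ) * 0 - 1 = -1 by norm_num, show (2:ℝ) * 0 = 0 by norm_num,
      hout (-1) (Or.inl (by norm_num)), mul_zero, add_zero] at h
    have hfin0 : m 0 ≠ ⊤ := ne_top_of_le_ne_top ENNReal.one_ne_top (hfin 0)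
    have h3 : (m 0).toReal ≤ S.lam * (m 0).toReal := by
      calc (m 0).toReal ≤ (ENNReal.ofReal S.lam * m 0).toReal :=
            ENNReal.toReal_mono (ENNReal.mul_ne_top ENNReal.ofReal_ne_top hfin0) h
        _ = S.lam * (m 0).toReal := by
            rw [ENNReal.toReal_mul, ENNReal.toReal_ofReal S.lam_nonneg]
    have h4 : (m 0).toReal = 0 := by
      nlinarith [S.lam_lt_one, ENNReal.toReal_nonneg (a := m 0)]
    rcases (ENNReal.toReal_eq_zero_iff _).mp h4 with h5 | h5
    · exact h5
    · exact absurd h5 hfin0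
  have hm1 : m 1 = 0 := by
    have h := hrec 1
    rw [show (2:ℝ) * 1 - 1 = 1 by norm_num, show (2:ℝ) * 1 = 2 by norm_num,
      hout 2 (Or.inr (by norm_num)), mul_zero, zero_add] at h
    have hfin1 : m 1 ≠ ⊤ := ne_top_of_le_ne_top ENNReal.one_ne_top (hfin 1)
    have h3 : (m 1).toReal ≤ (1 - S.lam) * (m 1).toReal := by
      calc (m 1).toReal ≤ (ENNReal.ofReal (1 - S.lam) * m 1).toReal :=
            ENNReal.toReal_mono (ENNReal.mul_ne_top ENNReal.ofReal_ne_top hfin1) h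
        _ = (1 - S.lam) * (m 1).toReal := by
            rw [ENNReal.toReal_mul, ENNReal.toReal_ofReal (by linarith [S.lam_lt_one])]
    have h4 : (m 1).toReal = 0 := by
      nlinarith [S.lam_pos, ENNReal.toReal_nonneg (a := m 1)]
    rcases (ENNReal.toReal_eq_zero_iff _).mp h4 with h5 | h5
    · exact h5
    · exact absurd h5 hfin1
  set κ : ℝ≥0∞ := ⨆ u : ℝ, m u with hκ
  have hκ1 : κ ≤ 1 := iSup_le hfin
  have hκfin : κ ≠ ⊤ := ne_top_of_le_ne_top ENNReal.one_ne_top hκ1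
  set cmax : ℝ := max S.lam (1 - S.lam) with hcmax
  have hcmax1 : cmax < 1 := max_lt S.lam_lt_one (by linarith [S.lam_pos])
  have hcmax0 : 0 ≤ cmax := le_max_of_le_left S.lam_nonneg
  have hc : ∀ u : ℝ, m u ≤ ENNReal.ofReal cmax * κ := by
    intro u
    by_cases hu : u < 0 ∨ 1 < u
    · rw [hout u hu]; exact zero_le
    push_neg at hu
    rcases lt_trichotomy u (1/2 : ℝ) with h | h | h
    · have h1 : m (2 * u - 1) = 0 := hout _ (Or.inl (by linarith))
      refine (hrec u).trans ?_
      rw [h1, mul_zero, add_zero]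
      exact mul_le_mul' (ENNReal.ofReal_le_ofReal (le_max_left _ _)) (le_iSup m (2 * u))
    · refine (hrec u).trans ?_
      rw [show 2 * u - 1 = 0 by rw [h]; norm_num, show 2 * u = 1 by rw [h]; norm_num,
        hm0, hm1, mul_zero, mul_zero, add_zero]
      exact zero_le
    · have h1 : m (2 * u) = 0 := hout _ (Or.inr (by linarith))
      refine (hrec u).trans ?_
      rw [h1, mul_zero, zero_add]
      exact mul_le_mul' (ENNReal.ofReal_le_ofReal (le_max_right _ _)) (le_iSup m (2 * u - 1))
  have hκc : κ ≤ ENNReal.ofReal cmax * κ := iSup_le hc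
  have hκ0 : κ = 0 := by
    have h3 : κ.toReal ≤ cmax * κ.toReal := by
      calc κ.toReal ≤ (ENNReal.ofReal cmax * κ).toReal :=
            ENNReal.toReal_mono (ENNReal.mul_ne_top ENNReal.ofReal_ne_top hκfin) hκc
        _ = cmax * κ.toReal := by rw [ENNReal.toReal_mul, ENNReal.toReal_ofReal hcmax0]
    have h4 : κ.toReal = 0 := by
      nlinarith [ENNReal.toReal_nonneg (a := κ)]
    rcases (ENNReal.toReal_eq_zero_iff _).mp h4 with h5 | h5
    · exact h5
    · exact absurd h5 hκfin
  exact le_antisymm (le_trans (le_iSup m t) (le_of_eq hκ0)) (zero_le)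

/-- The cumulative distribution identity: `F` computed through `psiM`. -/
noncomputable def Q (t : ℝ) : ℝ≥0∞ := volume {x ∈ Set.Icc (0:ℝ) 1 | S.psiM x ≤ t}

lemma Q_meas_set (t : ℝ) : MeasurableSet {x ∈ Set.Icc (0:ℝ) 1 | S.psiM x ≤ t} :=
  measurableSet_Icc.inter (S.psiM_measurable measurableSet_Iic)

lemma Q_fin (t : ℝ) : S.Q t ≤ 1 := by
  refine le_trans (measure_mono (Set.sep_subset _ _)) ?_
  rw [Real.volume_Icc]; norm_num

lemma Q_mono : Monotone S.Q := fun t t' h =>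
  measure_mono fun x hx => ⟨hx.1, hx.2.trans h⟩

lemma F_eq_Q (t : ℝ) : S.F t = (S.Q t).toReal := by
  rw [F, mes, Measure.restrict_apply' measurableSet_Icc]
  congr 1
  rw [Q]
  congr 1
  ext x
  simp only [Set.mem_inter_iff, Set.mem_setOf_eq, Set.mem_sep_iff]
  constructor
  · rintro ⟨h1, h2⟩; exact ⟨h2, by rwa [← S.psi_eq_psiM h2]⟩
  · rintro ⟨h1, h2⟩; exact ⟨by rwa [S.psi_eq_psiM h1], h1⟩

/-- Main distributional identity: the sub-level sets of `F ∘ ψ` have exact measure. -/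
lemma main_measure {s : ℝ} (hs0 : 0 < s) (hs1 : s ≤ 1) :
    volume {x ∈ Set.Icc (0:ℝ) 1 | S.F (S.psi x) < s} = ENNReal.ofReal s := by
  classical
  set A : Set ℝ := {t : ℝ | ENNReal.ofReal s ≤ S.Q t} with hA
  have h1A : (1:ℝ) ∈ A := by
    have hQ1 : S.Q 1 = 1 := by
      have hswp : {x ∈ Set.Icc (0:ℝ) 1 | S.psiM x ≤ 1} = Set.Icc (0:ℝ) 1 :=
        Set.eq_of_subset_of_subset (Set.sep_subset _ _) fun x hx => ⟨hx, S.psiM_le_one x⟩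
      show volume {x ∈ Set.Icc (0:ℝ) 1 | S.psiM x ≤ 1} = 1
      rw [hswp, Real.volume_Icc]
      norm_num
    show ENNReal.ofReal s ≤ S.Q 1
    rw [hQ1]
    exact ENNReal.ofReal_le_one.mpr hs1
  have hAne : A.Nonempty := ⟨1, h1A⟩
  have hbdd : BddBelow A := by
    refine ⟨0, fun t ht => ?_⟩
    by_contra hlt
    push_neg at hlt
    have hQ : S.Q t = 0 := by
      have hemp : {x ∈ Set.Icc (0:ℝ) 1 | S.psiM x ≤ t} = ∅ := by
        refine Set.eq_empty_iff_forall_notMem.mpr fun x hx => ?_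
        have := S.psiM_nonneg x
        linarith [hx.2]
      show volume {x ∈ Set.Icc (0:ℝ) 1 | S.psiM x ≤ t} = 0
      rw [hemp, measure_empty]
    have ht' : ENNReal.ofReal s ≤ S.Q t := ht
    rw [hQ] at ht'
    exact (ENNReal.ofReal_pos.mpr hs0).ne' (le_antisymm ht' (zero_le))
  set t0 := sInf A with ht0
  have ht0A : ∀ t < t0, S.Q t < ENNReal.ofReal s := by
    intro t ht
    by_contra hle
    push_neg at hle
    exact absurd (csInf_le hbdd hle) (not_le.mpr ht)
  have hup : ENNReal.ofReal s ≤ S.Q t0 := by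
    have hseq : Filter.Tendsto (fun k : ℕ => S.Q (t0 + 1 / (k + 1))) Filter.atTop
        (𝓝 (S.Q t0)) := by
      have hInter : ⋂ k : ℕ, {x ∈ Set.Icc (0:ℝ) 1 | S.psiM x ≤ t0 + 1 / (k + 1)} =
          {x ∈ Set.Icc (0:ℝ) 1 | S.psiM x ≤ t0} := by
        ext x
        simp only [Set.mem_iInter, Set.mem_sep_iff]
        constructor
        · intro h
          refine ⟨(h 0).1, ?_⟩
          refine le_of_forall_pos_le_add fun ε hε => ?_
          obtain ⟨k, hk⟩ := exists_nat_one_div_lt hε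
          exact ((h k).2).trans (by linarith)
        · intro h k
          have hpos : (0:ℝ) < 1 / ((k:ℝ) + 1) := by positivity
          exact ⟨h.1, h.2.trans (by linarith)⟩
      have := tendsto_measure_iInter_atTop
        (μ := volume) (s := fun k : ℕ => {x ∈ Set.Icc (0:ℝ) 1 | S.psiM x ≤ t0 + 1 / (k + 1)})
        (fun k => (S.Q_meas_set _).nullMeasurableSet)
        (fun k l hkl => fun x hx => ⟨hx.1, hx.2.trans (by
          have : (1:ℝ) / (l + 1) ≤ 1 / (k + 1) := by
            apply one_div_le_one_div_of_le
            · positivity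
            · exact_mod_cast add_le_add_left (Nat.cast_le.mpr hkl) 1
          linarith)⟩)
        ⟨0, ne_top_of_le_ne_top ENNReal.one_ne_top (S.Q_fin _)⟩
      rw [hInter] at this
      exact this
    refine ge_of_tendsto hseq (Filter.Eventually.of_forall fun k => ?_)
    have hlt : t0 < t0 + 1 / (k + 1) := by
      have : (0:ℝ) < 1 / (k + 1) := by positivity
      linarith
    obtain ⟨t, htA, htlt⟩ := exists_lt_of_csInf_lt hAne hlt
    exact le_trans htA (S.Q_mono htlt.le)
  have hdown : volume {x ∈ Set.Icc (0:ℝ) 1 | S.psiM x < t0} ≤ ENNReal.ofReal s := by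
    have hU : {x ∈ Set.Icc (0:ℝ) 1 | S.psiM x < t0} =
        ⋃ k : ℕ, {x ∈ Set.Icc (0:ℝ) 1 | S.psiM x ≤ t0 - 1 / (k + 1)} := by
      ext x
      simp only [Set.mem_iUnion, Set.mem_sep_iff]
      constructor
      · rintro ⟨h1, h2⟩
        obtain ⟨k, hk⟩ := exists_nat_one_div_lt (show (0:ℝ) < t0 - S.psiM x by linarith)
        exact ⟨k, h1, by linarith⟩
      · rintro ⟨k, h1, h2⟩
        have : (0:ℝ) < 1 / (k + 1) := by positivity
        exact ⟨h1, by linarith⟩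
    rw [hU, Monotone.measure_iUnion]
    · refine iSup_le fun k => ?_
      have : (0:ℝ) < 1 / (k + 1) := by positivity
      exact (ht0A _ (by linarith)).le
    · intro k l hkl x hx
      refine ⟨hx.1, hx.2.trans ?_⟩
      have : (1:ℝ) / (l + 1) ≤ 1 / (k + 1) := by
        apply one_div_le_one_div_of_le
        · positivity
        · exact_mod_cast add_le_add_left (Nat.cast_le.mpr hkl) 1
      linarith
  have hsplit : S.Q t0 = volume {x ∈ Set.Icc (0:ℝ) 1 | S.psiM x < t0} +
      volume {x ∈ Set.Icc (0:ℝ) 1 | S.psiM x = t0} := by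
    rw [Q]
    rw [← measure_union]
    · congr 1
      ext x
      simp only [Set.mem_sep_iff, Set.mem_union]
      constructor
      · rintro ⟨h1, h2⟩
        rcases lt_or_eq_of_le h2 with h | h
        · exact Or.inl ⟨h1, h⟩
        · exact Or.inr ⟨h1, h⟩
      · rintro (⟨h1, h2⟩ | ⟨h1, h2⟩)
        · exact ⟨h1, h2.le⟩
        · exact ⟨h1, h2.le⟩
    · rw [Set.disjoint_left]
      rintro x ⟨_, h1⟩ ⟨_, h2⟩
      exact absurd h2 (ne_of_lt h1)
    · exact measurableSet_Icc.inter (S.psiM_measurable (measurableSet_singleton t0))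
  have hatom := S.psiM_atom t0
  have hlt_eq : volume {x ∈ Set.Icc (0:ℝ) 1 | S.psiM x < t0} = ENNReal.ofReal s := by
    refine le_antisymm hdown ?_
    rw [hsplit, hatom, add_zero] at hup
    exact hup
  have hQt0 : S.Q t0 = ENNReal.ofReal s := by
    rw [hsplit, hatom, add_zero, hlt_eq]
  have hset : {x ∈ Set.Icc (0:ℝ) 1 | S.F (S.psi x) < s} =
      {x ∈ Set.Icc (0:ℝ) 1 | S.psiM x < t0} := by
    ext x
    simp only [Set.mem_sep_iff]
    constructor
    · rintro ⟨h1, h2⟩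
      refine ⟨h1, ?_⟩
      by_contra hge
      push_neg at hge
      have hF : s ≤ S.F (S.psi x) := by
        have h3 : S.F t0 ≤ S.F (S.psi x) := by
          rw [F_eq_Q, F_eq_Q, S.psi_eq_psiM h1]
          exact ENNReal.toReal_mono (ne_top_of_le_ne_top ENNReal.one_ne_top (S.Q_fin _))
            (S.Q_mono hge)
        have h4 : s ≤ S.F t0 := by
          rw [F_eq_Q, hQt0, ENNReal.toReal_ofReal hs0.le]
        linarith
      linarith
    · rintro ⟨h1, h2⟩
      refine ⟨h1, ?_⟩
      rw [F_eq_Q, S.psi_eq_psiM h1]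
      have h3 : S.Q (S.psiM x) < ENNReal.ofReal s := ht0A _ h2
      have h4 := ENNReal.toReal_mono ENNReal.ofReal_ne_top h3.le
      rcases lt_or_eq_of_le h4 with h | h
      · rw [ENNReal.toReal_ofReal hs0.le] at h; exact h
      · exfalso
        have h5 : S.Q (S.psiM x) = ENNReal.ofReal s := by
          have hfin : S.Q (S.psiM x) ≠ ⊤ := ne_top_of_le_ne_top ENNReal.one_ne_top (S.Q_fin _)
          exact (ENNReal.toReal_eq_toReal_iff' hfin ENNReal.ofReal_ne_top).mp h
        rw [h5] at h3
        exact lt_irrefl _ h3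
  rw [hset, hlt_eq]

end CantorData


/-- `(X_n)` has `α`-regularly varying tails with `𝔞_n = n^{1/α}`:
for every `y > 0`, `n · 𝔪{X_0 > y n^{1/α}} → y^{-α}`. -/
theorem alpha_regularly_varying_tails (S : CantorData) (α : ℝ)
    (hα : α ∈ Set.Ioo (0:ℝ) 2) (y : ℝ) (hy : 0 < y) :
    Filter.Tendsto
      (fun n : ℕ => (n : ℝ) *
        (S.mes {x | ENNReal.ofReal (y * (n : ℝ) ^ (1 / α)) < S.X α 0 x}).toReal)
      Filter.atTop (𝓝 (y ^ (-α))) := by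
  have hα0 : 0 < α := hα.1
  have hαne : α ≠ 0 := hα0.ne'
  set c : ℝ := y ^ (-α) with hc
  have hcpos : 0 < c := Real.rpow_pos_of_pos hy _
  have hev : (fun n : ℕ => (n : ℝ) *
      (S.mes {x | ENNReal.ofReal (y * (n : ℝ) ^ (1 / α)) < S.X α 0 x}).toReal) =ᶠ[Filter.atTop]
      (fun _ : ℕ => c) := by
    filter_upwards [Filter.eventually_ge_atTop (max 1 ⌈c⌉₊)] with n hn
    have hn1 : 1 ≤ n := le_trans (le_max_left _ _) hn
    have hnR : (1:ℝ) ≤ (n:ℝ) := by exact_mod_cast hn1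
    have hnpos : (0:ℝ) < (n:ℝ) := by linarith
    have hnc : c ≤ (n:ℝ) := by
      calc c ≤ (⌈c⌉₊ : ℝ) := Nat.le_ceil c
        _ ≤ (n:ℝ) := by exact_mod_cast le_trans (le_max_right 1 ⌈c⌉₊) hn
    set s : ℝ := c / n with hs
    have hs0 : 0 < s := div_pos hcpos hnpos
    have hs1 : s ≤ 1 := by
      rw [hs, div_le_one hnpos]; exact hnc
    set u : ℝ := y * (n:ℝ) ^ (1 / α) with hu
    have hupos : 0 < u := mul_pos hy (Real.rpow_pos_of_pos hnpos _)
    have hkey : ∀ r : ℝ, 0 ≤ r →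
        (ENNReal.ofReal u < ENNReal.ofReal r ^ (-(1 / α)) ↔ r < s) := by
      intro r hr
      rcases eq_or_lt_of_le hr with hr0 | hrpos
      · rw [← hr0]
        simp only [ENNReal.ofReal_zero]
        rw [ENNReal.zero_rpow_of_neg (neg_lt_zero.mpr (by positivity))]
        constructor
        · intro _; exact hs0
        · intro _; exact ENNReal.ofReal_lt_top
      · rw [ENNReal.ofReal_rpow_of_pos hrpos,
          ENNReal.ofReal_lt_ofReal_iff (Real.rpow_pos_of_pos hrpos _)]
        have hsu : s = u ^ (-α) := by
          have h1 : ((n:ℝ) ^ (1 / α)) ^ (-α) = ((n:ℝ))⁻¹ := by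
            rw [← Real.rpow_mul hnpos.le]
            have h2 : 1 / α * -α = -1 := by field_simp
            rw [h2, Real.rpow_neg_one]
          rw [hu, Real.mul_rpow hy.le (Real.rpow_pos_of_pos hnpos _).le, h1, hs, hc,
            div_eq_mul_inv]
        rw [hsu]
        have hP : (0:ℝ) < r ^ (1 / α) := Real.rpow_pos_of_pos hrpos _
        have hid : (r ^ (1 / α)) ^ α = r := by
          rw [← Real.rpow_mul hrpos.le, one_div, inv_mul_cancel₀ hαne, Real.rpow_one]
        have hinv : (u⁻¹) ^ α = u ^ (-α) := by
          rw [Real.inv_rpow hupos.le, ← Real.rpow_neg hupos.le]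
        have hiff1 : u < r ^ (-(1 / α)) ↔ r ^ (1 / α) < u⁻¹ := by
          rw [Real.rpow_neg hrpos.le]
          exact lt_inv_comm₀ hupos hP
        have hiff2 : r ^ (1 / α) < u⁻¹ ↔ r < u ^ (-α) := by
          constructor
          · intro h
            have h' := Real.rpow_lt_rpow hP.le h hα0
            rwa [hid, hinv] at h'
          · intro h
            have h' : (r ^ (1 / α)) ^ α < (u⁻¹) ^ α := by rw [hid, hinv]; exact h
            exact (Real.rpow_lt_rpow_iff hP.le (inv_nonneg.mpr hupos.le) hα0).mp h'
        exact hiff1.trans hiff2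
    have hFnn : ∀ t : ℝ, 0 ≤ S.F t := fun t => ENNReal.toReal_nonneg
    have hset : {x : ℝ | ENNReal.ofReal u < S.X α 0 x} ∩ Set.Icc (0:ℝ) 1 =
        {x ∈ Set.Icc (0:ℝ) 1 | S.F (S.psi x) < s} := by
      ext x
      simp only [Set.mem_inter_iff, Set.mem_setOf_eq, Set.mem_sep_iff, CantorData.X,
        Function.iterate_zero_apply, CantorData.phi]
      constructor
      · rintro ⟨h1, h2⟩
        exact ⟨h2, (hkey _ (hFnn _)).mp h1⟩
      · rintro ⟨h1, h2⟩
        exact ⟨(hkey _ (hFnn _)).mpr h2, h1⟩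
    have hmes : S.mes {x : ℝ | ENNReal.ofReal u < S.X α 0 x} = ENNReal.ofReal s := by
      rw [CantorData.mes, Measure.restrict_apply' measurableSet_Icc, hset,
        S.main_measure hs0 hs1]
    show (n : ℝ) * (S.mes {x : ℝ | ENNReal.ofReal u < S.X α 0 x}).toReal = c
    rw [hmes, ENNReal.toReal_ofReal hs0.le, hs]
    field_simp
  exact Filter.Tendsto.congr' hev.symm tendsto_const_nhds
end
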